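/- arXiv:2301.10578 — 6 statements merged into one kernel-verified Lean document; each statement's English description precedes it below -/
import Mathlib

section
/- Let G be a 2-connected simple graph in which the length of every cycle is divisible by 3. Then spc(G) ≤ 3; that is, there exists an edge coloring of G with at most 3 colors such that every pair of distinct vertices of G is joined by a strongly proper path. -/
open SimpleGraph

/-- A list of colors is *strongly proper* if any two of its terms at distance
at most 2 are distinct. -/
def StronglyProperSeq {α : Type*} (l : List α) : Prop :=
  ∀ i j : ℕ, i < j → j ≤ i + 2 → ∀ (hi : i < l.length) (hj : j < l.length),
    l.get ⟨i, hi⟩ ≠ l.get ⟨j, hj⟩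

/-- An edge coloring of `G` is strongly proper connected if every pair of distinct
vertices is joined by a path whose sequence of edge colors is strongly proper. -/
def IsStronglyProperConnected {V : Type*} (G : SimpleGraph V) {β : Type*}
    (c : Sym2 V → β) : Prop :=
  ∀ u v : V, u ≠ v → ∃ p : G.Walk u v, p.IsPath ∧ StronglyProperSeq (p.edges.map c)

/-- `G` is `k`-connected: it has more than `k` vertices and deleting any set of
fewer than `k` vertices leaves a connected graph. -/
def KConnected {V : Type*} (k : ℕ) (G : SimpleGraph V) : Prop :=
  k < Nat.card V ∧
    ∀ S : Set V, S.Finite → S.ncard < k → (G.induce Sᶜ).Connected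

section SPC
variable {V : Type*} {G : SimpleGraph V}




/-- walk is ascending w.r.t. f : every dart increases f by 1. -/
def Asc (f : V → ZMod 3) {u v : V} (p : G.Walk u v) : Prop :=
  ∀ d ∈ p.darts, f d.snd = f d.fst + 1

lemma asc_nil (f : V → ZMod 3) {u : V} : Asc f (Walk.nil : G.Walk u u) := by
  intro d hd; simp [Walk.darts] at hd

lemma asc_cons (f : V → ZMod 3) {u v w : V} (h : G.Adj u v) (p : G.Walk v w) :
    Asc f (Walk.cons h p) ↔ f v = f u + 1 ∧ Asc f p := by
  constructor
  · intro ha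
    refine ⟨ha ⟨(u,v), h⟩ (by simp [Walk.darts_cons]), fun d hd => ha d (by simp [Walk.darts_cons, hd])⟩
  · rintro ⟨h1, h2⟩ d hd
    rw [Walk.darts_cons] at hd
    rcases List.mem_cons.mp hd with rfl | hd
    · exact h1
    · exact h2 d hd

lemma asc_append {f : V → ZMod 3} {u v w : V} {p : G.Walk u v} {q : G.Walk v w}
    (hp : Asc f p) (hq : Asc f q) : Asc f (p.append q) := by
  intro d hd
  rw [Walk.darts_append, List.mem_append] at hd
  rcases hd with hd | hd
  · exact hp d hd
  · exact hq d hd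

lemma asc_sub {f : V → ZMod 3} {u v u' v' : V} {p : G.Walk u v} {q : G.Walk u' v'}
    (hsub : q.darts ⊆ p.darts) (hp : Asc f p) : Asc f q :=
  fun d hd => hp d (hsub hd)

lemma asc_congr {f g : V → ZMod 3} {u v : V} {p : G.Walk u v}
    (hfg : ∀ x ∈ p.support, f x = g x) (hp : Asc f p) : Asc g p := by
  intro d hd
  rw [← hfg _ (p.dart_fst_mem_support_of_mem_darts hd),
    ← hfg _ (p.dart_snd_mem_support_of_mem_darts hd)]
  exact hp d hd

lemma asc_length {f : V → ZMod 3} {u v : V} {p : G.Walk u v} (hp : Asc f p) :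
    (p.length : ZMod 3) = f v - f u := by
  induction p with
  | nil => simp
  | cons h q ih =>
    rw [asc_cons] at hp
    rw [Walk.length_cons]
    push_cast
    rw [ih hp.2, hp.1]
    ring

/-- extract an ascending path from an ascending walk. -/
lemma asc_to_path (f : V → ZMod 3) {u v : V} (p : G.Walk u v) (hp : Asc f p) :
    ∃ q : G.Walk u v, q.IsPath ∧ Asc f q ∧ q.support ⊆ p.support := by
  classical
  induction p with
  | nil => exact ⟨Walk.nil, Walk.IsPath.nil, asc_nil f, by simp⟩
  | @cons a b c h q ih =>
    rw [asc_cons] at hp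
    obtain ⟨q', hq'path, hq'asc, hq'sub⟩ := ih hp.2
    by_cases hu : a ∈ q'.support
    · refine ⟨q'.dropUntil a hu, hq'path.dropUntil hu, asc_sub (q'.darts_dropUntil_subset hu) hq'asc, ?_⟩
      intro x hx
      have := (q'.support_dropUntil_subset hu) hx
      simp only [Walk.support_cons]
      exact List.mem_cons_of_mem _ (hq'sub this)
    · refine ⟨Walk.cons h q', hq'path.cons hu, ?_, ?_⟩
      · rw [asc_cons]; exact ⟨hp.1, hq'asc⟩
      · intro x hx
        rw [Walk.support_cons] at hx ⊢
        rcases List.mem_cons.mp hx with rfl | hx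
        · exact List.mem_cons_self
        · exact List.mem_cons_of_mem _ (hq'sub hx)

variable {V : Type*} {G : SimpleGraph V}



/-- relabelling along an ear -/
lemma ear_label (U : Set V) (f : V → ZMod 3) :
    ∀ {s x : V} (p : G.Walk s x), p.support.Nodup →
      (∀ z ∈ p.support, z ≠ x → z ≠ s → z ∉ U) →
      ∀ c0 : ZMod 3, (s ∉ U ∨ c0 = f s) → (p.length : ZMod 3) = f x - c0 →
      ∃ f' : V → ZMod 3, (∀ z ∈ U, f' z = f z) ∧ f' s = c0 ∧ Asc f' p := by
  classical
  intro s x p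
  induction p with
  | nil =>
    intro _ _ c0 _ hlen
    refine ⟨f, fun z _ => rfl, ?_, asc_nil f⟩
    simp only [Walk.length_nil, Nat.cast_zero] at hlen
    linear_combination -hlen
  | @cons a b c h q ih =>
    intro hnd hint c0 hc0 hlen
    have hax : a ∉ q.support := by
      rw [Walk.support_cons] at hnd
      exact (List.nodup_cons.mp hnd).1
    have hanec : a ≠ c := fun hac => hax (hac ▸ q.end_mem_support)
    have haU : a ∉ U ∨ c0 = f a := hc0
    -- apply ih to q with c0+1
    obtain ⟨f1, hf1U, hf1b, hf1asc⟩ := ih ((List.nodup_cons.mp (by rwa [Walk.support_cons] at hnd)).2)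
      (by
        intro z hz hzx hzb
        by_cases hzb' : z = b
        · subst hzb'
          -- b ≠ b contradiction
          exact absurd rfl hzb
        · exact hint z (by rw [Walk.support_cons]; exact List.mem_cons_of_mem _ hz) hzx
            (fun hza => hax (hza ▸ hz)))
      (c0 + 1)
      (by
        by_cases hbc : b = c
        · right
          subst hbc
          have hqnd : q.support.Nodup := by
            rw [Walk.support_cons] at hnd
            exact (List.nodup_cons.mp hnd).2
          have hq : q = Walk.nil := Walk.isPath_iff_eq_nil.mp (Walk.IsPath.mk' hqnd)
          subst hq
          simp only [Walk.length_cons, Walk.length_nil, Nat.cast_add, Nat.cast_zero,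
            Nat.cast_one, zero_add] at hlen
          linear_combination hlen
        · left
          intro hbU
          exact hint b (by rw [Walk.support_cons]; exact List.mem_cons_of_mem _ q.start_mem_support)
            hbc (fun hba => hax (hba ▸ q.start_mem_support)) hbU)
      (by
        rw [Walk.length_cons] at hlen
        push_cast at hlen
        linear_combination hlen)
    refine ⟨Function.update f1 a c0, ?_, ?_, ?_⟩
    · intro z hz
      by_cases hza : z = a
      · subst hza
        rcases haU with h' | h'
        · exact absurd hz h'
        · simp [Function.update_self, h']
      · rw [Function.update_of_ne hza]
        exact hf1U z hz
    · simp
    · rw [asc_cons]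
      constructor
      · rw [Function.update_of_ne (fun hba => hax (by rw [← hba]; exact q.start_mem_support)),
          Function.update_self, hf1b]
      · refine asc_congr (fun z hz => ?_) hf1asc
        rw [Function.update_of_ne (fun hza => hax (by rw [← hza]; exact hz))]





/-- every two vertices of U are joined by an ascending walk inside U -/
def GoodOn (G : SimpleGraph V) (f : V → ZMod 3) (U : Set V) : Prop :=
  ∀ u ∈ U, ∀ v ∈ U, ∃ p : G.Walk u v, Asc f p ∧ ∀ z ∈ p.support, z ∈ U

lemma good_extend {U : Set V} {f f' : V → ZMod 3} {x y : V} (hx : x ∈ U) (hy : y ∈ U)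
    (hgood : GoodOn G f U) (hfU : ∀ z ∈ U, f' z = f z)
    (R : G.Walk y x) (hR : Asc f' R) :
    GoodOn G f' (U ∪ {z | z ∈ R.support}) := by
  classical
  -- old walks are ascending for f'
  have old : ∀ u ∈ U, ∀ v ∈ U, ∃ p : G.Walk u v, Asc f' p ∧ ∀ z ∈ p.support, z ∈ U := by
    intro u hu v hv
    obtain ⟨p, hasc, hsupp⟩ := hgood u hu v hv
    exact ⟨p, asc_congr (fun z hz => (hfU z (hsupp z hz)).symm) hasc, hsupp⟩
  intro u hu v hv
  -- A : u → x
  have hA : ∃ p : G.Walk u x, Asc f' p ∧ ∀ z ∈ p.support, z ∈ U ∪ {z | z ∈ R.support} := by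
    rcases hu with hu | hu
    · obtain ⟨p, h1, h2⟩ := old u hu x hx
      exact ⟨p, h1, fun z hz => Or.inl (h2 z hz)⟩
    · refine ⟨R.dropUntil u hu, asc_sub (R.darts_dropUntil_subset hu) hR,
        fun z hz => Or.inr (R.support_dropUntil_subset hu hz)⟩
  have hB : ∃ p : G.Walk y v, Asc f' p ∧ ∀ z ∈ p.support, z ∈ U ∪ {z | z ∈ R.support} := by
    rcases hv with hv | hv
    · obtain ⟨p, h1, h2⟩ := old y hy v hv
      exact ⟨p, h1, fun z hz => Or.inl (h2 z hz)⟩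
    · refine ⟨R.takeUntil v hv, asc_sub (R.darts_takeUntil_subset hv) hR,
        fun z hz => Or.inr (R.support_takeUntil_subset hv hz)⟩
  obtain ⟨pA, hA1, hA2⟩ := hA
  obtain ⟨pM, hM1, hM2⟩ := old x hx y hy
  obtain ⟨pB, hB1, hB2⟩ := hB
  refine ⟨pA.append (pM.append pB), asc_append hA1 (asc_append hM1 hB1), ?_⟩
  intro z hz
  rw [Walk.mem_support_append_iff] at hz
  rcases hz with hz | hz
  · exact hA2 z hz
  · rw [Walk.mem_support_append_iff] at hz
    rcases hz with hz | hz
    · exact Or.inl (hM2 z hz)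
    · exact hB2 z hz





lemma kconn_finite (hG : KConnected 2 G) : Finite V := by
  rcases hG with ⟨h, _⟩
  by_contra hinf
  rw [not_finite_iff_infinite] at hinf
  rw [Nat.card_eq_zero_of_infinite] at h
  omega

lemma kconn_card (hG : KConnected 2 G) : 3 ≤ Nat.card V := hG.1

lemma kconn_del (hG : KConnected 2 G) (x : V) : (G.induce {x}ᶜ).Connected := by
  refine hG.2 {x} (Set.finite_singleton x) ?_
  rw [Set.ncard_singleton]; omega

/-- delete-one connectivity gives a path between two vertices avoiding x, in G -/
lemma avoid_walk (hG : KConnected 2 G) {a b x : V} (ha : a ≠ x) (hb : b ≠ x) :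
    ∃ p : G.Walk a b, p.IsPath ∧ ∀ z ∈ p.support, z ≠ x := by
  classical
  have hconn := kconn_del hG x
  have hr := hconn.preconnected ⟨a, ha⟩ ⟨b, hb⟩
  obtain ⟨q⟩ := hr
  let emb := SimpleGraph.Embedding.induce ({x}ᶜ : Set V) (G := G)
  let p := (q.map emb.toHom).bypass
  refine ⟨p, Walk.bypass_isPath _, ?_⟩
  intro z hz
  have hz' := (q.map emb.toHom).support_bypass_subset hz
  rw [Walk.support_map] at hz'
  obtain ⟨⟨z', hz'mem⟩, _, rfl⟩ := List.mem_map.mp hz'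
  exact hz'mem

lemma kconn_connected (hG : KConnected 2 G) : G.Connected := by
  classical
  have : Finite V := kconn_finite hG
  have hne : Nonempty V := by
    have := kconn_card hG
    rcases Nat.card_pos_iff.mp (by omega : 0 < Nat.card V) with ⟨h1, _⟩
    exact h1
  rw [connected_iff]
  refine ⟨?_, hne⟩
  intro a b
  by_cases hab : a = b
  · exact hab ▸ Reachable.refl a
  · -- pick x ∉ {a, b}
    have : ∃ x : V, x ≠ a ∧ x ≠ b := by
      by_contra hx
      push_neg at hx
      have : Nat.card V ≤ 2 := by
        have hsub : (Set.univ : Set V) ⊆ {a, b} := by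
          intro z _
          by_cases hza : z = a
          · exact Or.inl hza
          · exact Or.inr (hx z hza)
        calc Nat.card V = (Set.univ : Set V).ncard := by
              rw [Set.ncard_univ]
            _ ≤ ({a, b} : Set V).ncard := Set.ncard_le_ncard hsub (Set.toFinite _)
            _ ≤ 2 := (Set.ncard_insert_le _ _).trans (by rw [Set.ncard_singleton])
      have := kconn_card hG
      omega
    obtain ⟨x, hxa, hxb⟩ := this
    obtain ⟨p, _, _⟩ := avoid_walk hG (Ne.symm hxa) (Ne.symm hxb)
    exact ⟨p⟩

/-- find an edge from U to outside -/
lemma exists_boundary (hconn : G.Connected) {U : Set V} (hne : U.Nonempty) (hproper : U ≠ Set.univ) :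
    ∃ x ∈ U, ∃ w, w ∉ U ∧ G.Adj x w := by
  classical
  obtain ⟨u0, hu0⟩ := hne
  have : ∃ w, w ∉ U := by
    by_contra h
    push_neg at h
    exact hproper (Set.eq_univ_of_forall h)
  obtain ⟨w0, hw0⟩ := this
  obtain ⟨p⟩ := hconn.preconnected w0 u0
  clear hproper
  induction p with
  | nil => exact absurd hu0 hw0
  | @cons a b c h q ih =>
    by_cases hb : b ∈ U
    · exact ⟨b, hb, a, hw0, h.symm⟩
    · exact ih hu0 hb







/-- prefix of a walk up to the first vertex in U -/
lemma first_entry {U : Set V} : ∀ {a t : V} (p : G.Walk a t), a ∉ U → t ∈ U →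
    ∃ y ∈ U, ∃ q : G.Walk a y, (∀ z ∈ q.support, z ≠ y → z ∉ U) ∧ q.support ⊆ p.support := by
  intro a t p
  induction p with
  | nil => intro ha ht; exact absurd ht ha
  | @cons a b c h q ih =>
    intro ha ht
    by_cases hb : b ∈ U
    · refine ⟨b, hb, Walk.cons h Walk.nil, ?_, ?_⟩
      · intro z hz hzb
        simp only [Walk.support_cons, Walk.support_nil, List.mem_cons, List.mem_singleton] at hz
        rcases hz with rfl | hz
        · exact ha
        · rcases hz with rfl | hz
          · exact absurd rfl hzb
          · simp at hz
      · intro z hz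
        simp only [Walk.support_cons, Walk.support_nil, List.mem_cons] at hz ⊢
        rcases hz with rfl | hz
        · exact Or.inl rfl
        · rcases hz with rfl | hz
          · exact Or.inr (Walk.start_mem_support q)
          · simp at hz
    · obtain ⟨y, hy, q', hq'1, hq'2⟩ := ih hb ht
      refine ⟨y, hy, Walk.cons h q', ?_, ?_⟩
      · intro z hz hzy
        rw [Walk.support_cons] at hz
        rcases List.mem_cons.mp hz with rfl | hz
        · exact ha
        · exact hq'1 z hz hzy
      · intro z hz
        rw [Walk.support_cons] at hz ⊢
        rcases List.mem_cons.mp hz with rfl | hz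
        · exact List.mem_cons_self
        · exact List.mem_cons_of_mem _ (hq'2 hz)

/-- each edge of a path has an endpoint that is in the support and differs from the final
vertex. -/
lemma edge_has_non_end : ∀ {a b : V} (p : G.Walk a b), p.IsPath →
    ∀ e ∈ p.edges, ∃ z, z ∈ e ∧ z ∈ p.support ∧ z ≠ b := by
  intro a b p
  induction p with
  | nil => intro _ e he; simp [Walk.edges_nil] at he
  | @cons a c b h q ih =>
    intro hp e he
    rw [Walk.edges_cons] at he
    rcases List.mem_cons.mp he with rfl | he
    · refine ⟨a, Sym2.mem_mk_left a c, Walk.start_mem_support _, fun hab => ?_⟩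
      subst hab
      exact (Walk.cons_isPath_iff h q).mp hp |>.2 q.end_mem_support
    · obtain ⟨z, hz1, hz2, hz3⟩ := ih ((Walk.cons_isPath_iff h q).mp hp).1 e he
      exact ⟨z, hz1, by rw [Walk.support_cons]; exact List.mem_cons_of_mem _ hz2, hz3⟩

lemma asc_dart_get {f : V → ZMod 3} : ∀ {u v : V} (p : G.Walk u v), Asc f p →
    ∀ (i : ℕ) (hi : i < p.darts.length), f (p.darts.get ⟨i, hi⟩).toProd.1 = f u + i := by
  intro u v p
  induction p with
  | nil => intro _ i hi; simp [Walk.darts_nil] at hi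
  | @cons a b c h q ih =>
    intro hp i hi
    rw [asc_cons] at hp
    match i with
    | 0 => simp [Walk.darts_cons]
    | (i+1) =>
      have hi' : i < q.darts.length := by
        simpa [Walk.darts_cons] using hi
      have hq := ih hp.2 i hi'
      simp only [List.get_eq_getElem] at hq ⊢
      have hstep : (Walk.cons h q).darts[i+1]'hi = q.darts[i]'hi' := by
        have hd : (Walk.cons h q).darts = ⟨(a, b), h⟩ :: q.darts := rfl
        simp [hd]
      rw [hstep, hq, hp.1]
      push_cast
      ring

noncomputable def earColor (f : V → ZMod 3) : Sym2 V → ZMod 3 :=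
  Sym2.lift ⟨fun a b => f a + f b, fun a b => add_comm (f a) (f b)⟩

lemma asc_strongly_proper {f : V → ZMod 3} {u v : V} (p : G.Walk u v) (hp : Asc f p) :
    StronglyProperSeq (p.edges.map (earColor f)) := by
  intro i j hij hj2 hi hj hEq
  have hlen : (p.edges.map (earColor f)).length = p.darts.length := by
    simp [Walk.edges]
  have key : ∀ (k : ℕ) (hk : k < (p.edges.map (earColor f)).length),
      (p.edges.map (earColor f)).get ⟨k, hk⟩ = 2 * f u + 2 * (k : ZMod 3) + 1 := by
    intro k hk
    have hk' : k < p.darts.length := hlen ▸ hk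
    have hd : (p.edges.map (earColor f)).get ⟨k, hk⟩
        = earColor f ((p.darts.get ⟨k, hk'⟩).edge) := by
      simp only [List.get_eq_getElem, List.getElem_map, Walk.edges, List.getElem_map]
    rw [hd]
    have h1 : f (p.darts.get ⟨k, hk'⟩).toProd.1 = f u + k := asc_dart_get p hp k hk'
    have h2 : f (p.darts.get ⟨k, hk'⟩).toProd.2 = f (p.darts.get ⟨k, hk'⟩).toProd.1 + 1 :=
      hp _ (List.get_mem _ _)
    have : (p.darts.get ⟨k, hk'⟩).edge = s((p.darts.get ⟨k, hk'⟩).toProd.1,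
        (p.darts.get ⟨k, hk'⟩).toProd.2) := rfl
    rw [this]
    show f _ + f _ = _
    rw [h2, h1]
    ring
  rw [key i hi, key j hj] at hEq
  have h2 : (2 : ZMod 3) * (i : ZMod 3) = 2 * (j : ZMod 3) := by
    linear_combination hEq
  have hij' : (i : ZMod 3) = (j : ZMod 3) :=
    mul_left_cancel₀ (by decide : (2 : ZMod 3) ≠ 0) h2
  have hcase : j = i + 1 ∨ j = i + 2 := by omega
  rcases hcase with rfl | rfl
  · have : ((i : ZMod 3)) = ((i : ℕ) + 1 : ℕ) := by exact_mod_cast hij'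
    push_cast at this
    exact one_ne_zero (by linear_combination -this)
  · have : ((i : ZMod 3)) = ((i : ℕ) + 2 : ℕ) := by exact_mod_cast hij'
    push_cast at this
    have : (2 : ZMod 3) = 0 := by linear_combination -this
    exact (by decide : (2 : ZMod 3) ≠ 0) this

lemma two_neighbors (hG2 : KConnected 2 G) (x : V) :
    ∃ a b : V, a ≠ b ∧ G.Adj x a ∧ G.Adj x b := by
  classical
  have hfin : Finite V := kconn_finite hG2
  by_contra hcon
  push_neg at hcon
  -- all neighbors of x coincide
  have hallsame : ∀ a b, G.Adj x a → G.Adj x b → a = b := by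
    intro a b ha hb
    by_contra hab
    exact (hcon a b hab ha) hb
  -- choose a vertex z to delete: a neighbor if one exists, else anything ≠ x
  have hcard := kconn_card hG2
  by_cases hnbr : ∃ a, G.Adj x a
  · obtain ⟨a, ha⟩ := hnbr
    -- find u ∉ {x, a}
    have : ∃ u : V, u ≠ x ∧ u ≠ a := by
      by_contra hu
      push_neg at hu
      have hsub : (Set.univ : Set V) ⊆ {x, a} := by
        intro z _
        by_cases hzx : z = x
        · exact Or.inl hzx
        · exact Or.inr (hu z hzx)
      have : Nat.card V ≤ 2 := by
        calc Nat.card V = (Set.univ : Set V).ncard := by rw [Set.ncard_univ]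
          _ ≤ ({x, a} : Set V).ncard := Set.ncard_le_ncard hsub (Set.toFinite _)
          _ ≤ 2 := (Set.ncard_insert_le _ _).trans (by rw [Set.ncard_singleton])
      omega
    obtain ⟨u, hux, hua⟩ := this
    obtain ⟨p, _, hpavoid⟩ := avoid_walk hG2 (G.ne_of_adj ha) hua
    cases p with
    | nil => exact hux rfl
    | @cons _ b _ h q =>
      exact (hpavoid b (by
        rw [Walk.support_cons]
        exact List.mem_cons_of_mem _ q.start_mem_support)) (hallsame b a h ha)
  · push_neg at hnbr
    -- x has no neighbors at all; G connected with ≥ 2 vertices gives a contradiction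
    have hconn := kconn_connected hG2
    have : ∃ u : V, u ≠ x := by
      by_contra hu
      push_neg at hu
      have : Nat.card V ≤ 1 := by
        calc Nat.card V = (Set.univ : Set V).ncard := by rw [Set.ncard_univ]
          _ ≤ ({x} : Set V).ncard := Set.ncard_le_ncard (fun z _ => hu z) (Set.toFinite _)
          _ ≤ 1 := by rw [Set.ncard_singleton]
      omega
    obtain ⟨u, hux⟩ := this
    obtain ⟨p⟩ := hconn.preconnected x u
    cases p with
    | nil => exact hux rfl
    | cons h q => exact (hnbr _) h
lemma dvd_iff_zmod3 (n : ℕ) : 3 ∣ n ↔ (n : ZMod 3) = 0 :=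
  (ZMod.natCast_eq_zero_iff n 3).symm

lemma step_singleton (hG2 : KConnected 2 G)
    (hcyc : ∀ (v : V) (w : G.Walk v v), w.IsCycle → 3 ∣ w.length)
    {x : V} {f : V → ZMod 3} (hgood : GoodOn G f {x}) :
    ∃ (f' : V → ZMod 3) (U' : Set V), GoodOn G f' U' ∧ ({x} : Set V) ⊆ U' ∧
      ∃ w ∈ U', w ∉ ({x} : Set V) := by
  classical
  obtain ⟨a, b, hab, hxa, hxb⟩ := two_neighbors hG2 x
  have hax : a ≠ x := (G.ne_of_adj hxa).symm
  have hbx : b ≠ x := (G.ne_of_adj hxb).symm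
  obtain ⟨P, hPpath, hPavoid⟩ := avoid_walk hG2 hax hbx
  have hx_not_P : x ∉ P.support := fun hx => (hPavoid x hx) rfl
  -- Q : a → x
  set Q : G.Walk a x := P.append (Walk.cons hxb.symm Walk.nil) with hQ
  have hQsupp : Q.support = P.support ++ [x] := by
    rw [hQ, Walk.support_append]
    simp
  have hQnd : Q.support.Nodup := by
    rw [hQsupp]
    refine List.Nodup.append hPpath.support_nodup (List.nodup_singleton x) ?_
    intro z hz hz'
    rw [List.mem_singleton] at hz'
    exact (hPavoid z hz) hz'
  -- the cycle
  set C : G.Walk x x := Walk.cons hxa Q with hC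
  have hCedges : C.edges = s(x, a) :: (P.edges ++ [s(b, x)]) := by
    rw [hC, Walk.edges_cons, hQ, Walk.edges_append]
    simp
  have hCcyc : C.IsCycle := by
    rw [Walk.isCycle_def]
    refine ⟨⟨?_⟩, by simp [hC], ?_⟩
    · rw [hCedges]
      refine List.nodup_cons.mpr ⟨?_, ?_⟩
      · intro hmem
        rcases List.mem_append.mp hmem with hmem | hmem
        · exact hx_not_P (P.fst_mem_support_of_mem_edges hmem)
        · rw [List.mem_singleton, Sym2.eq_iff] at hmem
          rcases hmem with ⟨h1, h2⟩ | ⟨h1, h2⟩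
          · exact hbx h1.symm
          · exact hab h2
      · refine List.Nodup.append hPpath.isTrail.edges_nodup (List.nodup_singleton _) ?_
        intro e he he'
        rw [List.mem_singleton] at he'
        subst he'
        exact hx_not_P (P.snd_mem_support_of_mem_edges he)
    · have h : C.support.tail = Q.support := by
        rw [hC, Walk.support_cons, List.tail_cons]
      rw [h]
      exact hQnd
  have hClen : 3 ∣ C.length := hcyc x C hCcyc
  have hQlen : (Q.length : ZMod 3) = f x - (f x + 1) := by
    have h1 : C.length = Q.length + 1 := by rw [hC, Walk.length_cons]
    have h2 : ((Q.length + 1 : ℕ) : ZMod 3) = 0 := by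
      rw [← h1, ← dvd_iff_zmod3]; exact hClen
    push_cast at h2
    linear_combination h2
  obtain ⟨f1, hf1U, hf1a, hf1asc⟩ := ear_label ({x} : Set V) f Q hQnd
    (fun z _ hzx _ hzU => hzx (Set.mem_singleton_iff.mp hzU))
    (f x + 1) (Or.inl (fun h => hax (Set.mem_singleton_iff.mp h))) hQlen
  have hf1x : f1 x = f x := hf1U x rfl
  have hascC : Asc f1 C := by
    rw [hC, asc_cons]
    exact ⟨by rw [hf1a, hf1x], hf1asc⟩
  have hgood' := good_extend (Set.mem_singleton x) (Set.mem_singleton x) hgood hf1U C hascC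
  refine ⟨f1, {x} ∪ {z | z ∈ C.support}, hgood', Set.subset_union_left, a, ?_, ?_⟩
  · exact Or.inr (by
      rw [hC, Walk.support_cons]
      exact List.mem_cons_of_mem _ Q.start_mem_support)
  · exact fun h => hax (Set.mem_singleton_iff.mp h)
lemma step_general (hG2 : KConnected 2 G)
    (hcyc : ∀ (v : V) (w : G.Walk v v), w.IsCycle → 3 ∣ w.length)
    {U : Set V} {f : V → ZMod 3} (hgood : GoodOn G f U)
    (hne : U.Nonempty) (hproper : U ≠ Set.univ)
    (htwo : ∃ p q : V, p ∈ U ∧ q ∈ U ∧ p ≠ q) :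
    ∃ (f' : V → ZMod 3) (U' : Set V), GoodOn G f' U' ∧ U ⊆ U' ∧ ∃ w ∈ U', w ∉ U := by
  classical
  obtain ⟨x, hxU, w, hwU, hxw⟩ := exists_boundary (kconn_connected hG2) hne hproper
  have hwx : w ≠ x := fun h => hwU (h ▸ hxU)
  -- find y0 ∈ U with y0 ≠ x
  obtain ⟨p0, q0, hp0, hq0, hpq⟩ := htwo
  have hy0 : ∃ y0 ∈ U, y0 ≠ x := by
    by_cases hp0x : p0 = x
    · exact ⟨q0, hq0, fun h => hpq (hp0x.trans h.symm)⟩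
    · exact ⟨p0, hp0, hp0x⟩
  obtain ⟨y0, hy0U, hy0x⟩ := hy0
  -- path from w to y0 avoiding x
  obtain ⟨W0, _, hW0avoid⟩ := avoid_walk hG2 hwx hy0x
  -- first entry into U
  obtain ⟨y, hyU, q1, hq1int, hq1sub⟩ := first_entry W0 hwU hy0U
  set P : G.Walk w y := q1.bypass with hPdef
  have hPpath : P.IsPath := q1.bypass_isPath
  have hPsub : P.support ⊆ q1.support := q1.support_bypass_subset
  have hPint : ∀ z ∈ P.support, z ≠ y → z ∉ U := fun z hz => hq1int z (hPsub hz)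
  have hPx : ∀ z ∈ P.support, z ≠ x := fun z hz => hW0avoid z (hq1sub (hPsub hz))
  have hyx : y ≠ x := hPx y P.end_mem_support
  -- the ear E : x → y
  set E : G.Walk x y := Walk.cons hxw P with hEdef
  have hEpath : E.IsPath := by
    rw [hEdef, Walk.cons_isPath_iff]
    exact ⟨hPpath, fun h => (hPx x h) rfl⟩
  -- ascending path A : x → y inside U
  obtain ⟨W1, hW1asc, hW1supp⟩ := hgood x hxU y hyU
  obtain ⟨A, hApath, hAasc, hAsub⟩ := asc_to_path f W1 hW1asc
  have hAU : ∀ z ∈ A.support, z ∈ U := fun z hz => hW1supp z (hAsub hz)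
  -- the cycle
  set C : G.Walk x x := E.append A.reverse with hCdef
  have hAedgeU : ∀ e ∈ A.edges, ∀ z, z ∈ e → z ∈ U := by
    intro e he z hz
    induction e with
    | _ c d =>
      rw [Sym2.mem_iff] at hz
      rcases hz with rfl | rfl
      · exact hAU z (A.fst_mem_support_of_mem_edges he)
      · exact hAU z (A.snd_mem_support_of_mem_edges he)
  have hy_not_tail : y ∉ A.reverse.support.tail := by
    have h1 : A.reverse.support = y :: A.reverse.support.tail := Walk.support_eq_cons _
    have h2 := hApath.reverse.support_nodup
    rw [h1, List.nodup_cons] at h2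
    exact h2.1
  have hCcyc : C.IsCycle := by
    rw [Walk.isCycle_def]
    refine ⟨⟨?_⟩, ?_, ?_⟩
    · rw [hCdef, Walk.edges_append]
      refine List.Nodup.append hEpath.isTrail.edges_nodup hApath.reverse.isTrail.edges_nodup ?_
      intro e heE heA
      have heA' : e ∈ A.edges := by
        rw [Walk.edges_reverse, List.mem_reverse] at heA
        exact heA
      rw [hEdef, Walk.edges_cons] at heE
      rcases List.mem_cons.mp heE with rfl | heE
      · exact hwU (hAedgeU _ heA' w (Sym2.mem_mk_right x w))
      · obtain ⟨z, hz1, hz2, hz3⟩ := edge_has_non_end P hPpath e heE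
        exact (hPint z hz2 hz3) (hAedgeU _ heA' z hz1)
    · intro h
      have := congrArg Walk.length h
      rw [hCdef, Walk.length_append, Walk.length_nil] at this
      rw [hEdef, Walk.length_cons] at this
      omega
    · rw [hCdef, Walk.tail_support_append]
      have hEtail : E.support.tail = P.support := by
        rw [hEdef, Walk.support_cons, List.tail_cons]
      rw [hEtail]
      refine List.Nodup.append hPpath.support_nodup
        (hApath.reverse.support_nodup.sublist (List.tail_sublist _)) ?_
      intro z hzP hzA
      have hzy : z ≠ y := fun h => hy_not_tail (h ▸ hzA)
      have hzU : z ∈ U := by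
        have : z ∈ A.reverse.support := (List.tail_sublist _).mem hzA
        rw [Walk.support_reverse, List.mem_reverse] at this
        exact hAU z this
      exact (hPint z hzP hzy) hzU
  have hClen : 3 ∣ C.length := hcyc x C hCcyc
  have hAlen : (A.length : ZMod 3) = f y - f x := asc_length hAasc
  -- label the reversed ear
  set R : G.Walk y x := E.reverse with hRdef
  have hRnd : R.support.Nodup := hEpath.reverse.support_nodup
  have hRlen : (R.length : ZMod 3) = f x - f y := by
    have h1 : C.length = E.length + A.length := by
      rw [hCdef, Walk.length_append, Walk.length_reverse]
    have h2 : ((E.length + A.length : ℕ) : ZMod 3) = 0 := by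
      rw [← h1, ← dvd_iff_zmod3]; exact hClen
    push_cast at h2
    have h3 : R.length = E.length := by rw [hRdef, Walk.length_reverse]
    rw [h3]
    linear_combination h2 - hAlen
  have hRint : ∀ z ∈ R.support, z ≠ x → z ≠ y → z ∉ U := by
    intro z hz hzx hzy
    rw [hRdef, Walk.support_reverse, List.mem_reverse, hEdef, Walk.support_cons] at hz
    rcases List.mem_cons.mp hz with rfl | hz
    · exact absurd rfl hzx
    · exact hPint z hz hzy
  obtain ⟨f1, hf1U, hf1y, hf1asc⟩ := ear_label U f R hRnd hRint (f y) (Or.inr rfl) hRlen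
  have hgood' := good_extend hxU hyU hgood hf1U R hf1asc
  refine ⟨f1, U ∪ {z | z ∈ R.support}, hgood', Set.subset_union_left, w, ?_, hwU⟩
  refine Or.inr ?_
  show w ∈ R.support
  rw [hRdef, Walk.support_reverse, List.mem_reverse, hEdef, Walk.support_cons]
  exact List.mem_cons_of_mem _ P.start_mem_support
end SPC

theorem spc_le_three_of_cycles_div_three_aux {V : Type*} (G : SimpleGraph V)
    (hG : KConnected 2 G)
    (hcyc : ∀ (v : V) (w : G.Walk v v), w.IsCycle → 3 ∣ w.length) :
    ∃ c : Sym2 V → Fin 3, IsStronglyProperConnected G c := by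
  classical
  have hfin : Finite V := kconn_finite hG
  have key : ∀ (n : ℕ) (U : Set V) (f : V → ZMod 3), U.Nonempty → GoodOn G f U →
      Uᶜ.ncard ≤ n → ∃ f', GoodOn G f' Set.univ := by
    intro n
    induction n with
    | zero =>
      intro U f hne hgood hcard
      have h0 : Uᶜ.ncard = 0 := Nat.le_zero.mp hcard
      have hU : U = Set.univ := by
        have : Uᶜ = ∅ := (Set.ncard_eq_zero (Set.toFinite _)).mp h0
        rwa [Set.compl_empty_iff] at this
      exact ⟨f, hU ▸ hgood⟩
    | succ n ih =>
      intro U f hne hgood hcard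
      by_cases hU : U = Set.univ
      · exact ⟨f, hU ▸ hgood⟩
      · have hstep : ∃ (f' : V → ZMod 3) (U' : Set V), GoodOn G f' U' ∧ U ⊆ U' ∧
            ∃ w ∈ U', w ∉ U := by
          by_cases htwo : ∃ p q : V, p ∈ U ∧ q ∈ U ∧ p ≠ q
          · exact step_general hG hcyc hgood hne hU htwo
          · push_neg at htwo
            obtain ⟨x, hx⟩ := hne
            have hsing : U = {x} := by
              ext z
              constructor
              · intro hz
                exact htwo z x hz hx
              · rintro rfl
                exact hx
            subst hsing
            exact step_singleton hG hcyc hgood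
        obtain ⟨f', U', hgood', hsub, w, hwU', hwU⟩ := hstep
        refine ih U' f' ⟨w, hwU'⟩ hgood' ?_
        have hssub : U'ᶜ ⊂ Uᶜ := by
          refine ⟨Set.compl_subset_compl.mpr hsub, fun hcon => ?_⟩
          exact (hcon (Set.mem_compl hwU)) hwU'
        have := Set.ncard_lt_ncard hssub (Set.toFinite _)
        omega
  have hne : Nonempty V := by
    have := kconn_card hG
    rcases Nat.card_pos_iff.mp (by omega : 0 < Nat.card V) with ⟨h1, _⟩
    exact h1
  obtain ⟨x0⟩ := hne
  have hgood0 : GoodOn G (fun _ => 0) {x0} := by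
    intro u hu v hv
    rw [Set.mem_singleton_iff] at hu hv
    subst hu; subst hv
    exact ⟨Walk.nil, asc_nil _, by simp⟩
  obtain ⟨f, hgoodall⟩ := key (({x0} : Set V)ᶜ.ncard) {x0} (fun _ => 0)
    ⟨x0, rfl⟩ hgood0 le_rfl
  refine ⟨earColor f, ?_⟩
  intro u v huv
  obtain ⟨W, hasc, _⟩ := hgoodall u trivial v trivial
  obtain ⟨p, hppath, hpasc, _⟩ := asc_to_path f W hasc
  exact ⟨p, hppath, asc_strongly_proper p hpasc⟩

/-- If `G` is 2-connected and the length of every cycle in `G` is divisible by 3,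
then `spc(G) ≤ 3`. -/
theorem spc_le_three_of_cycles_div_three {V : Type*} (G : SimpleGraph V)
    (hG : KConnected 2 G)
    (hcyc : ∀ (v : V) (w : G.Walk v v), w.IsCycle → 3 ∣ w.length) :
    ∃ c : Sym2 V → Fin 3, IsStronglyProperConnected G c :=
  spc_le_three_of_cycles_div_three_aux G hG hcyc
end

section
/- Let G be a simple graph in which the length of every cycle is divisible by 3, let s and t be distinct vertices of G, and let P, Q, R be three pairwise distinct s–t paths in G that are pairwise internally vertex-disjoint (any two of them share only the vertices s and t). Then the length of each of P, Q and R is divisible by 3. -/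
open SimpleGraph

private lemma path_edge_st {V : Type*} {G : SimpleGraph V} {s t : V} (hst : s ≠ t)
    {p : G.Walk s t} (hp : p.IsPath) (he : s(s, t) ∈ p.edges) : p.length = 1 := by
  cases p with
  | nil => simp at he
  | cons h p' =>
    rename_i a
    rw [SimpleGraph.Walk.edges_cons, List.mem_cons] at he
    rcases he with he | he
    · rw [Sym2.eq_iff] at he
      rcases he with ⟨-, h2⟩ | ⟨-, h2⟩
      · subst h2
        have : p' = SimpleGraph.Walk.nil := by
          have := hp.of_cons
          exact SimpleGraph.Walk.isPath_iff_eq_nil.mp this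
        simp [this]
      · exact absurd h2.symm hst
    · exfalso
      have hs : s ∈ p'.support := p'.fst_mem_support_of_mem_edges he
      have := hp.support_nodup
      rw [SimpleGraph.Walk.support_cons] at this
      exact (List.nodup_cons.mp this).1 hs

private lemma walk_len_one_eq {V : Type*} {G : SimpleGraph V} {s t : V}
    {p q : G.Walk s t} (hp : p.length = 1) (hq : q.length = 1) : p = q := by
  cases p with
  | nil => simp at hp
  | cons h p' =>
    cases q with
    | nil => simp at hq
    | cons h' q' =>
      rename_i a b
      have hp0 : p'.length = 0 := by simpa using hp
      have hq0 : q'.length = 0 := by simpa using hq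
      have ha : a = t := SimpleGraph.Walk.eq_of_length_eq_zero hp0
      have hb : b = t := SimpleGraph.Walk.eq_of_length_eq_zero hq0
      subst ha; subst hb
      have hp' : p' = SimpleGraph.Walk.nil := SimpleGraph.Walk.nil_iff_eq_nil.mp (SimpleGraph.Walk.length_eq_zero_iff.mp hp0)
      have hq' : q' = SimpleGraph.Walk.nil := SimpleGraph.Walk.nil_iff_eq_nil.mp (SimpleGraph.Walk.length_eq_zero_iff.mp hq0)
      subst hp'; subst hq'
      rfl

private lemma two_paths_cycle {V : Type*} {G : SimpleGraph V}
    (hcyc : ∀ (v : V) (w : G.Walk v v), w.IsCycle → 3 ∣ w.length)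
    {s t : V} (hst : s ≠ t) {p q : G.Walk s t}
    (hp : p.IsPath) (hq : q.IsPath) (hne : p ≠ q)
    (hd : ∀ x ∈ p.support, x ∈ q.support → x = s ∨ x = t) :
    3 ∣ (p.length + q.length) := by
  have hcyc' : (p.append q.reverse).IsCycle := by
    constructor
    · constructor
      · constructor
        rw [Walk.edges_append, Walk.edges_reverse]
        rw [List.nodup_append]
        refine ⟨hp.isTrail.edges_nodup, (List.nodup_reverse).mpr hq.isTrail.edges_nodup, ?_⟩
        intro e hep e' heq' hee'
        subst hee'
        have heq : e ∈ q.edges := List.mem_reverse.mp heq'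
        -- e has both endpoints in both supports
        induction e using Sym2.ind with
        | _ a b =>
          have ha : a = s ∨ a = t := hd a (p.fst_mem_support_of_mem_edges hep)
            (q.fst_mem_support_of_mem_edges heq)
          have hb : b = s ∨ b = t := hd b (p.snd_mem_support_of_mem_edges hep)
            (q.snd_mem_support_of_mem_edges heq)
          have hab : a ≠ b := by
            intro hab
            subst hab
            exact (G.irrefl (p.adj_of_mem_edges hep))
          have hest : s(a, b) = s(s, t) := by
            rcases ha with rfl | rfl <;> rcases hb with rfl | rfl
            · exact absurd rfl hab
            · rfl
            · exact Sym2.eq_swap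
            · exact absurd rfl hab
          rw [hest] at hep heq
          have h1 := path_edge_st hst hp hep
          have h2 := path_edge_st hst hq heq
          exact hne (walk_len_one_eq h1 h2)
      · -- not nil
        intro hnil
        have : p.length + q.reverse.length = 0 := by
          rw [← Walk.length_append, hnil]; rfl
        have hp0 : p.length = 0 := by omega
        exact hst (Walk.eq_of_length_eq_zero hp0)
    · -- support tail nodup
      rw [Walk.tail_support_append, List.nodup_append]
      refine ⟨hp.support_nodup.tail, hq.reverse.support_nodup.tail, ?_⟩
      intro x hxp y hxq hxy
      subst hxy
      have hxp' : x ∈ p.support := List.mem_of_mem_tail hxp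
      have hxq' : x ∈ q.support := by
        have : x ∈ q.reverse.support := List.mem_of_mem_tail hxq
        rwa [Walk.support_reverse, List.mem_reverse] at this
      rcases hd x hxp' hxq' with rfl | rfl
      · have := hp.support_nodup
        rw [p.support_eq_cons] at this
        exact (List.nodup_cons.mp this).1 hxp
      · have := hq.reverse.support_nodup
        rw [q.reverse.support_eq_cons] at this
        exact (List.nodup_cons.mp this).1 hxq
  have := hcyc s _ hcyc'
  rwa [Walk.length_append, Walk.length_reverse] at this

/-- Let `G` be a graph in which the length of every cycle is divisible by 3, and
let `p`, `q`, `r` be three pairwise distinct, pairwise internally vertex-disjoint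
paths between two distinct vertices `s` and `t`. Then the length of each of the
three paths is divisible by 3. -/
theorem three_fan_paths_length_div_three {V : Type*} (G : SimpleGraph V)
    (hcyc : ∀ (v : V) (w : G.Walk v v), w.IsCycle → 3 ∣ w.length)
    {s t : V} (hst : s ≠ t)
    (p q r : G.Walk s t)
    (hp : p.IsPath) (hq : q.IsPath) (hr : r.IsPath)
    (hpq : p ≠ q) (hpr : p ≠ r) (hqr : q ≠ r)
    (hpq' : ∀ x ∈ p.support, x ∈ q.support → x = s ∨ x = t)
    (hpr' : ∀ x ∈ p.support, x ∈ r.support → x = s ∨ x = t)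
    (hqr' : ∀ x ∈ q.support, x ∈ r.support → x = s ∨ x = t) :
    3 ∣ p.length ∧ 3 ∣ q.length ∧ 3 ∣ r.length := by
  have h1 := two_paths_cycle hcyc hst hp hq hpq hpq'
  have h2 := two_paths_cycle hcyc hst hp hr hpr hpr'
  have h3 := two_paths_cycle hcyc hst hq hr hqr hqr'
  omega
end

section
/- Let H be a minimally 2-connected simple graph and let (P_1, …, P_h) be a greedy open ear decomposition of H. Then the ears appear in order of nonincreasing length: for every 1 ≤ i < h, the ear P_{i+1} has at most as many edges as P_i. -/
open SimpleGraph

/-- `H` is minimally 2-connected: it is 2-connected, but deleting any edge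
destroys 2-connectedness. -/
def MinimallyTwoConnected {V : Type*} (H : SimpleGraph V) : Prop :=
  KConnected 2 H ∧ ∀ e ∈ H.edgeSet, ¬ KConnected 2 (H.deleteEdges {e})

/-- The subgraph `H_k = P₁ ∪ ⋯ ∪ P_k` formed by the first `k` ears
(the ears with indices `0, …, k-1`). -/
def earPrefix {V : Type*} {H : SimpleGraph V} {h : ℕ} {s t : Fin (h + 1) → V}
    (ear : (i : Fin (h + 1)) → H.Walk (s i) (t i)) (k : ℕ) : H.Subgraph :=
  ⨆ i : Fin (h + 1), if (i : ℕ) < k then (ear i).toSubgraph else ⊥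

/-- An open ear decomposition `(P₁, …, P_{h+1})` of `H` (indexed here by
`Fin (h+1)`): the ears partition the edge set of `H`, the first ear is a cycle,
and every later ear is a path with two distinct endpoints meeting the union of
the previous ears exactly in its endpoints. -/
structure OpenEarDecomp {V : Type*} (H : SimpleGraph V) (h : ℕ) where
  /-- first endpoints of the ears -/
  s : Fin (h + 1) → V
  /-- second endpoints of the ears -/
  t : Fin (h + 1) → V
  /-- the ears, as walks in `H` -/
  ear : (i : Fin (h + 1)) → H.Walk (s i) (t i)
  /-- the first ear is closed -/
  first_closed : s 0 = t 0
  /-- the first ear is a cycle -/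
  first_cycle : ((ear 0).copy rfl first_closed.symm).IsCycle
  /-- every later ear is a path -/
  ears_path : ∀ i : Fin (h + 1), 0 < (i : ℕ) → (ear i).IsPath
  /-- every later ear has two distinct endpoints -/
  ends_ne : ∀ i : Fin (h + 1), 0 < (i : ℕ) → s i ≠ t i
  /-- the endpoints of a later ear lie in the union of the previous ears -/
  ends_mem : ∀ i : Fin (h + 1), 0 < (i : ℕ) →
    s i ∈ (earPrefix ear i).verts ∧ t i ∈ (earPrefix ear i).verts
  /-- a later ear meets the union of the previous ears only in its endpoints -/
  internal_disjoint : ∀ i : Fin (h + 1), 0 < (i : ℕ) →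
    ∀ x ∈ (ear i).support, x ∈ (earPrefix ear i).verts → x = s i ∨ x = t i
  /-- distinct ears are edge-disjoint -/
  edge_disjoint : ∀ i j : Fin (h + 1), i ≠ j →
    ∀ e ∈ (ear i).edges, e ∉ (ear j).edges
  /-- the ears cover all edges of `H` -/
  edges_cover : ∀ e ∈ H.edgeSet, ∃ i : Fin (h + 1), e ∈ (ear i).edges

/-- An ear decomposition is *greedy* if at every step the longest possible ear
is added: the first ear is a longest cycle of `H`, and no admissible ear is
longer than the ear actually added. -/
def OpenEarDecomp.Greedy {V : Type*} {H : SimpleGraph V} {h : ℕ}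
    (D : OpenEarDecomp H h) : Prop :=
  (∀ (v : V) (w : H.Walk v v), w.IsCycle → w.length ≤ (D.ear 0).length) ∧
  (∀ i : Fin (h + 1), 0 < (i : ℕ) →
    ∀ (u v : V) (q : H.Walk u v), q.IsPath → u ≠ v →
      u ∈ (earPrefix D.ear i).verts → v ∈ (earPrefix D.ear i).verts →
      (∀ x ∈ q.support, x ∈ (earPrefix D.ear i).verts → x = u ∨ x = v) →
      (∀ e ∈ q.edges, e ∉ (earPrefix D.ear i).edgeSet) →
      q.length ≤ (D.ear i).length)

section EarHelpers

open SimpleGraph Walk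

variable {V : Type*} [DecidableEq V] {H : SimpleGraph V}

private lemma myAppendPath {u v w : V} {p : H.Walk u v} {q : H.Walk v w}
    (hp : p.IsPath) (hq : q.IsPath)
    (hdisj : ∀ x, x ∈ p.support → x ∈ q.support → x = v) : (p.append q).IsPath := by
  rw [Walk.isPath_def, Walk.support_append]
  refine List.Nodup.append hp.support_nodup hq.support_nodup.tail ?_
  intro x hxp hxq
  have hx := hdisj x hxp (List.mem_of_mem_tail hxq)
  subst hx
  have hnd := hq.support_nodup
  rw [q.support_eq_cons] at hnd
  exact (List.nodup_cons.mp hnd).1 hxq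

private lemma myStartNotMemDrop {a b v : V} {P : H.Walk a b} (hP : P.IsPath)
    (hv : v ∈ P.support) (hva : v ≠ a) : a ∉ (P.dropUntil v hv).support := by
  intro ha
  have hnd : ((P.takeUntil v hv).append (P.dropUntil v hv)).support.Nodup := by
    rw [Walk.take_spec]; exact hP.support_nodup
  rw [Walk.support_append] at hnd
  have hdisj := List.disjoint_of_nodup_append hnd
  have ha' : a ∈ (P.dropUntil v hv).support.tail := by
    rcases List.mem_cons.mp (by rwa [(P.dropUntil v hv).support_eq_cons] at ha) with h | h
    · exact absurd h.symm hva
    · exact h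
  exact hdisj (Walk.start_mem_support _) ha'

private lemma myEndNotMemTake {a b v : V} {P : H.Walk a b} (hP : P.IsPath)
    (hv : v ∈ P.support) (hvb : v ≠ b) : b ∉ (P.takeUntil v hv).support := by
  intro hb
  have hnd : ((P.takeUntil v hv).append (P.dropUntil v hv)).support.Nodup := by
    rw [Walk.take_spec]; exact hP.support_nodup
  rw [Walk.support_append] at hnd
  have hdisj := List.disjoint_of_nodup_append hnd
  have hb' : b ∈ (P.dropUntil v hv).support.tail := by
    have hbs := Walk.end_mem_support (P.dropUntil v hv)
    rcases List.mem_cons.mp (by rwa [(P.dropUntil v hv).support_eq_cons] at hbs) with h | h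
    · exact absurd h.symm hvb
    · exact h
  exact hdisj hb hb'

private lemma myTakeDropDisj {a b u : V} {P : H.Walk a b} (hP : P.IsPath) (hu : u ∈ P.support) :
    ∀ x, x ∈ (P.takeUntil u hu).support → x ∈ (P.dropUntil u hu).support → x = u := by
  intro x hxt hxd
  by_contra hxu
  have hnd : ((P.takeUntil u hu).append (P.dropUntil u hu)).support.Nodup := by
    rw [Walk.take_spec]; exact hP.support_nodup
  rw [Walk.support_append] at hnd
  have hdisj := List.disjoint_of_nodup_append hnd
  have hx' : x ∈ (P.dropUntil u hu).support.tail := by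
    rcases List.mem_cons.mp (by rwa [(P.dropUntil u hu).support_eq_cons] at hxd) with h | h
    · exact absurd h hxu
    · exact h
  exact hdisj hxt hx'

private lemma mem_earPrefix_verts_iff {h : ℕ} {s t : Fin (h + 1) → V}
    (ear : (i : Fin (h + 1)) → H.Walk (s i) (t i)) (k : ℕ) (x : V) :
    x ∈ (earPrefix ear k).verts ↔ ∃ i : Fin (h + 1), (i : ℕ) < k ∧ x ∈ (ear i).support := by
  rw [earPrefix, SimpleGraph.Subgraph.verts_iSup]
  simp only [Set.mem_iUnion]
  constructor
  · rintro ⟨i, hi⟩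
    by_cases h' : (i : ℕ) < k
    · rw [if_pos h'] at hi
      exact ⟨i, h', (Walk.mem_verts_toSubgraph _).1 hi⟩
    · rw [if_neg h', SimpleGraph.Subgraph.verts_bot] at hi
      exact absurd hi (Set.notMem_empty x)
  · rintro ⟨i, h1, h2⟩
    exact ⟨i, by rw [if_pos h1]; exact (Walk.mem_verts_toSubgraph _).2 h2⟩

private lemma mem_earPrefix_edges_iff {h : ℕ} {s t : Fin (h + 1) → V}
    (ear : (i : Fin (h + 1)) → H.Walk (s i) (t i)) (k : ℕ) (e : Sym2 V) :
    e ∈ (earPrefix ear k).edgeSet ↔ ∃ i : Fin (h + 1), (i : ℕ) < k ∧ e ∈ (ear i).edges := by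
  rw [earPrefix, SimpleGraph.Subgraph.edgeSet_iSup]
  simp only [Set.mem_iUnion]
  constructor
  · rintro ⟨i, hi⟩
    by_cases h' : (i : ℕ) < k
    · rw [if_pos h'] at hi
      exact ⟨i, h', (Walk.mem_edges_toSubgraph _).1 hi⟩
    · rw [if_neg h', SimpleGraph.Subgraph.edgeSet_bot] at hi
      exact absurd hi (Set.notMem_empty e)
  · rintro ⟨i, h1, h2⟩
    exact ⟨i, by rw [if_pos h1]; exact (Walk.mem_edges_toSubgraph _).2 h2⟩

private lemma extendOne {a b u v : V} {A : Set V}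
    (P : H.Walk a b) (hP : P.IsPath) (hab : a ≠ b)
    (haA : a ∈ A) (hbA : b ∈ A)
    (hPint : ∀ x ∈ P.support, x ∈ A → x = a ∨ x = b)
    (q : H.Walk u v) (hq : q.IsPath)
    (hqsup : ∀ x ∈ q.support, (x ∈ A ∨ x ∈ P.support) → x = u ∨ x = v)
    (huA : u ∈ A) (hvP : v ∈ P.support) (hvA : v ∉ A) :
    ∃ (u' v' : V) (q' : H.Walk u' v'), q'.IsPath ∧ u' ≠ v' ∧ u' ∈ A ∧ v' ∈ A ∧
      (∀ x ∈ q'.support, x ∈ A → x = u' ∨ x = v') ∧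
      (∀ e ∈ q'.edges, e ∈ q.edges ∨ e ∈ P.edges) ∧
      q.length ≤ q'.length := by
  have hva : v ≠ a := fun h => hvA (h ▸ haA)
  have hvb : v ≠ b := fun h => hvA (h ▸ hbA)
  by_cases hub : u = b
  · -- go back to `a` along the first part of `P`
    refine ⟨u, a, q.append (P.takeUntil v hvP).reverse, ?_, hub ▸ hab.symm, huA, haA, ?_, ?_, ?_⟩
    · refine myAppendPath hq (hP.takeUntil hvP).reverse ?_
      intro x hxq hxs
      rw [Walk.support_reverse, List.mem_reverse] at hxs
      have hxP := Walk.support_takeUntil_subset _ hvP hxs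
      rcases hqsup x hxq (Or.inr hxP) with rfl | rfl
      · exact absurd hxs (hub ▸ myEndNotMemTake hP hvP hvb)
      · rfl
    · intro x hx hxA
      rw [Walk.mem_support_append_iff] at hx
      rcases hx with hx | hx
      · rcases hqsup x hx (Or.inl hxA) with rfl | rfl
        · exact Or.inl rfl
        · exact absurd hxA hvA
      · rw [Walk.support_reverse, List.mem_reverse] at hx
        have hxP := Walk.support_takeUntil_subset _ hvP hx
        rcases hPint x hxP hxA with rfl | rfl
        · exact Or.inr rfl
        · exact absurd hx (myEndNotMemTake hP hvP hvb)
    · intro e he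
      rw [Walk.edges_append] at he
      rcases List.mem_append.mp he with he | he
      · exact Or.inl he
      · rw [Walk.edges_reverse, List.mem_reverse] at he
        exact Or.inr (Walk.edges_takeUntil_subset _ hvP he)
    · rw [Walk.length_append]; omega
  · -- go forward to `b` along the second part of `P`
    refine ⟨u, b, q.append (P.dropUntil v hvP), ?_, hub, huA, hbA, ?_, ?_, ?_⟩
    · refine myAppendPath hq (hP.dropUntil hvP) ?_
      intro x hxq hxs
      have hxP := Walk.support_dropUntil_subset _ hvP hxs
      rcases hqsup x hxq (Or.inr hxP) with rfl | rfl
      · rcases hPint x hxP huA with rfl | rfl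
        · exact absurd hxs (myStartNotMemDrop hP hvP hva)
        · exact absurd rfl hub
      · rfl
    · intro x hx hxA
      rw [Walk.mem_support_append_iff] at hx
      rcases hx with hx | hx
      · rcases hqsup x hx (Or.inl hxA) with rfl | rfl
        · exact Or.inl rfl
        · exact absurd hxA hvA
      · have hxP := Walk.support_dropUntil_subset _ hvP hx
        rcases hPint x hxP hxA with rfl | rfl
        · exact absurd hx (myStartNotMemDrop hP hvP hva)
        · exact Or.inr rfl
    · intro e he
      rw [Walk.edges_append] at he
      rcases List.mem_append.mp he with he | he
      · exact Or.inl he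
      · exact Or.inr (Walk.edges_dropUntil_subset _ hvP he)
    · rw [Walk.length_append]; omega

private lemma extendTwo {a b u v : V} {A : Set V}
    (P : H.Walk a b) (hP : P.IsPath) (hab : a ≠ b)
    (haA : a ∈ A) (hbA : b ∈ A)
    (hPint : ∀ x ∈ P.support, x ∈ A → x = a ∨ x = b)
    (q : H.Walk u v) (hq : q.IsPath) (huv : u ≠ v)
    (hqsup : ∀ x ∈ q.support, (x ∈ A ∨ x ∈ P.support) → x = u ∨ x = v)
    (huP : u ∈ P.support) (huA : u ∉ A) (hvP : v ∈ P.support) (hvA : v ∉ A) :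
    ∃ (u' v' : V) (q' : H.Walk u' v'), q'.IsPath ∧ u' ≠ v' ∧ u' ∈ A ∧ v' ∈ A ∧
      (∀ x ∈ q'.support, x ∈ A → x = u' ∨ x = v') ∧
      (∀ e ∈ q'.edges, e ∈ q.edges ∨ e ∈ P.edges) ∧
      q.length ≤ q'.length := by
  have ht1 : (P.takeUntil u huP).IsPath := hP.takeUntil huP
  have hd1 : (P.dropUntil u huP).IsPath := hP.dropUntil huP
  have htd := myTakeDropDisj hP huP
  have hvcases : v ∈ (P.takeUntil u huP).support ∨ v ∈ (P.dropUntil u huP).support := by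
    have hv' := hvP
    rw [← Walk.take_spec P huP, Walk.mem_support_append_iff] at hv'
    exact hv'
  rcases hvcases with hvt | hvd
  · -- v lies strictly before u on P
    have hvnotd : v ∉ (P.dropUntil u huP).support := fun hc => huv.symm (htd v hvt hc)
    have hunott1a : u ∉ ((P.takeUntil u huP).takeUntil v hvt).support :=
      myEndNotMemTake ht1 hvt huv.symm
    have ht1a : ((P.takeUntil u huP).takeUntil v hvt).IsPath := ht1.takeUntil hvt
    have ht1asub : ∀ x, x ∈ ((P.takeUntil u huP).takeUntil v hvt).support → x ∈ P.support :=
      fun x hx => Walk.support_takeUntil_subset _ huP (Walk.support_takeUntil_subset _ hvt hx)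
    have hinner : (q.reverse.append (P.dropUntil u huP)).IsPath := by
      refine myAppendPath hq.reverse hd1 ?_
      intro x hxq hxd
      rw [Walk.support_reverse, List.mem_reverse] at hxq
      have hxP := Walk.support_dropUntil_subset _ huP hxd
      rcases hqsup x hxq (Or.inr hxP) with rfl | rfl
      · rfl
      · exact absurd hxd hvnotd
    refine ⟨a, b, ((P.takeUntil u huP).takeUntil v hvt).append
        (q.reverse.append (P.dropUntil u huP)), ?_, hab, haA, hbA, ?_, ?_, ?_⟩
    · refine myAppendPath ht1a hinner ?_
      intro x hxt hxi
      rw [Walk.mem_support_append_iff] at hxi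
      rcases hxi with hxq | hxd
      · rw [Walk.support_reverse, List.mem_reverse] at hxq
        rcases hqsup x hxq (Or.inr (ht1asub x hxt)) with rfl | rfl
        · exact absurd hxt hunott1a
        · rfl
      · have := htd x (Walk.support_takeUntil_subset _ hvt hxt) hxd
        exact absurd (this ▸ hxt) hunott1a
    · intro x hx hxA
      rw [Walk.mem_support_append_iff, Walk.mem_support_append_iff] at hx
      rcases hx with hx | hx | hx
      · exact hPint x (ht1asub x hx) hxA
      · rw [Walk.support_reverse, List.mem_reverse] at hx
        rcases hqsup x hx (Or.inl hxA) with rfl | rfl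
        · exact absurd hxA huA
        · exact absurd hxA hvA
      · exact hPint x (Walk.support_dropUntil_subset _ huP hx) hxA
    · intro e he
      rw [Walk.edges_append, Walk.edges_append] at he
      rcases List.mem_append.mp he with he | he
      · exact Or.inr (Walk.edges_takeUntil_subset _ huP (Walk.edges_takeUntil_subset _ hvt he))
      · rcases List.mem_append.mp he with he | he
        · rw [Walk.edges_reverse, List.mem_reverse] at he
          exact Or.inl he
        · exact Or.inr (Walk.edges_dropUntil_subset _ huP he)
    · rw [Walk.length_append, Walk.length_append, Walk.length_reverse]; omega
  · -- v lies strictly after u on P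
    have hvnott : v ∉ (P.takeUntil u huP).support := fun hc => huv.symm (htd v hc hvd)
    have hunott2 : u ∉ ((P.dropUntil u huP).dropUntil v hvd).support :=
      myStartNotMemDrop hd1 hvd huv.symm
    have ht2 : ((P.dropUntil u huP).dropUntil v hvd).IsPath := hd1.dropUntil hvd
    have ht2sub : ∀ x, x ∈ ((P.dropUntil u huP).dropUntil v hvd).support → x ∈ P.support :=
      fun x hx => Walk.support_dropUntil_subset _ huP (Walk.support_dropUntil_subset _ hvd hx)
    have hinner : (q.append ((P.dropUntil u huP).dropUntil v hvd)).IsPath := by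
      refine myAppendPath hq ht2 ?_
      intro x hxq hxd
      rcases hqsup x hxq (Or.inr (ht2sub x hxd)) with rfl | rfl
      · exact absurd hxd hunott2
      · rfl
    refine ⟨a, b, (P.takeUntil u huP).append
        (q.append ((P.dropUntil u huP).dropUntil v hvd)), ?_, hab, haA, hbA, ?_, ?_, ?_⟩
    · refine myAppendPath ht1 hinner ?_
      intro x hxt hxi
      rw [Walk.mem_support_append_iff] at hxi
      rcases hxi with hxq | hxd
      · rcases hqsup x hxq (Or.inr (Walk.support_takeUntil_subset _ huP hxt)) with rfl | rfl
        · rfl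
        · exact absurd hxt hvnott
      · have hxd' := Walk.support_dropUntil_subset _ hvd hxd
        have := htd x hxt hxd'
        exact absurd (this ▸ hxd) hunott2
    · intro x hx hxA
      rw [Walk.mem_support_append_iff, Walk.mem_support_append_iff] at hx
      rcases hx with hx | hx | hx
      · exact hPint x (Walk.support_takeUntil_subset _ huP hx) hxA
      · rcases hqsup x hx (Or.inl hxA) with rfl | rfl
        · exact absurd hxA huA
        · exact absurd hxA hvA
      · exact hPint x (ht2sub x hx) hxA
    · intro e he
      rw [Walk.edges_append, Walk.edges_append] at he
      rcases List.mem_append.mp he with he | he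
      · exact Or.inr (Walk.edges_takeUntil_subset _ huP he)
      · rcases List.mem_append.mp he with he | he
        · exact Or.inl he
        · exact Or.inr (Walk.edges_dropUntil_subset _ huP
            (Walk.edges_dropUntil_subset _ hvd he))
    · rw [Walk.length_append, Walk.length_append]; omega

private lemma existsExtension {a b u v : V} {A : Set V}
    (P : H.Walk a b) (hP : P.IsPath) (hab : a ≠ b)
    (haA : a ∈ A) (hbA : b ∈ A)
    (hPint : ∀ x ∈ P.support, x ∈ A → x = a ∨ x = b)
    (q : H.Walk u v) (hq : q.IsPath) (huv : u ≠ v)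
    (hqsup : ∀ x ∈ q.support, (x ∈ A ∨ x ∈ P.support) → x = u ∨ x = v)
    (hu : u ∈ A ∨ u ∈ P.support) (hv : v ∈ A ∨ v ∈ P.support) :
    ∃ (u' v' : V) (q' : H.Walk u' v'), q'.IsPath ∧ u' ≠ v' ∧ u' ∈ A ∧ v' ∈ A ∧
      (∀ x ∈ q'.support, x ∈ A → x = u' ∨ x = v') ∧
      (∀ e ∈ q'.edges, e ∈ q.edges ∨ e ∈ P.edges) ∧
      q.length ≤ q'.length := by
  by_cases huA : u ∈ A
  · by_cases hvA : v ∈ A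
    · exact ⟨u, v, q, hq, huv, huA, hvA, fun x hx hxA => hqsup x hx (Or.inl hxA),
        fun e he => Or.inl he, le_refl _⟩
    · exact extendOne P hP hab haA hbA hPint q hq hqsup huA (hv.resolve_left hvA) hvA
  · by_cases hvA : v ∈ A
    · obtain ⟨u', v', q', h1, h2, h3, h4, h5, h6, h7⟩ :=
        extendOne P hP hab haA hbA hPint q.reverse hq.reverse
          (fun x hx hmem => (hqsup x (by rwa [Walk.support_reverse, List.mem_reverse] at hx)
            hmem).symm)
          hvA (hu.resolve_left huA) huA
      refine ⟨u', v', q', h1, h2, h3, h4, h5, fun e he => ?_, ?_⟩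
      · rcases h6 e he with h | h
        · left; rwa [Walk.edges_reverse, List.mem_reverse] at h
        · exact Or.inr h
      · rwa [Walk.length_reverse] at h7
    · exact extendTwo P hP hab haA hbA hPint q hq huv hqsup (hu.resolve_left huA) huA
        (hv.resolve_left hvA) hvA

private lemma cycleTakeUntilIsPath {u v : V} {c : H.Walk u u} (hc : c.IsCycle)
    (hv : v ∈ c.support) (hne : v ≠ u) : (c.takeUntil v hv).IsPath := by
  have hsplit : c.support.tail =
      (c.takeUntil v hv).support.tail ++ (c.dropUntil v hv).support.tail := by
    conv_lhs => rw [← Walk.take_spec c hv]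
    rw [Walk.support_append, (c.takeUntil v hv).support_eq_cons]
    rfl
  have hnd : ((c.takeUntil v hv).support.tail ++ (c.dropUntil v hv).support.tail).Nodup := by
    rw [← hsplit]; exact hc.support_nodup
  rw [Walk.isPath_def, (c.takeUntil v hv).support_eq_cons]
  refine List.nodup_cons.mpr ⟨?_, hnd.of_append_left⟩
  intro hu
  have hu2 : u ∈ (c.dropUntil v hv).support.tail :=
    Walk.end_mem_tail_support_of_ne hne _
  exact List.disjoint_of_nodup_append hnd hu hu2

private lemma cycleExtend {x u v : V} {C : H.Walk x x} (hC : C.IsCycle)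
    (q : H.Walk u v) (hq : q.IsPath) (huv : u ≠ v)
    (hu : u ∈ C.support) (hv : v ∈ C.support)
    (hqsup : ∀ y ∈ q.support, y ∈ C.support → y = u ∨ y = v)
    (hqedge : ∀ e ∈ q.edges, e ∉ C.edges) :
    ∃ (w : V) (c : H.Walk w w), c.IsCycle ∧ q.length ≤ c.length := by
  have hmemsup : ∀ y, y ∈ (C.rotate u hu).support ↔ y ∈ C.support := by
    intro y
    show y ∈ ((C.dropUntil u hu).append (C.takeUntil u hu)).support ↔ _
    rw [Walk.mem_support_append_iff]
    conv_rhs => rw [← Walk.take_spec C hu]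
    rw [Walk.mem_support_append_iff]
    exact or_comm
  have hC1 : (C.rotate u hu).IsCycle := hC.rotate hu
  have hv1 : v ∈ (C.rotate u hu).support := (hmemsup v).2 hv
  have harc : ((C.rotate u hu).takeUntil v hv1).IsPath := cycleTakeUntilIsPath hC1 hv1 huv.symm
  have harcsub : ∀ y, y ∈ ((C.rotate u hu).takeUntil v hv1).support → y ∈ C.support :=
    fun y hy => (hmemsup y).1 (Walk.support_takeUntil_subset _ hv1 hy)
  have harce : ∀ e, e ∈ ((C.rotate u hu).takeUntil v hv1).edges → e ∈ C.edges := by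
    intro e he
    exact (Walk.rotate_edges C u hu).mem_iff.1 (Walk.edges_takeUntil_subset _ hv1 he)
  refine ⟨u, q.append ((C.rotate u hu).takeUntil v hv1).reverse, ?_, ?_⟩
  · rw [Walk.isCycle_def]
    refine ⟨?_, ?_, ?_⟩
    · rw [Walk.isTrail_def, Walk.edges_append]
      refine List.Nodup.append hq.edges_nodup ?_ ?_
      · rw [Walk.edges_reverse]
        exact List.nodup_reverse.mpr harc.edges_nodup
      · intro e heq her
        rw [Walk.edges_reverse, List.mem_reverse] at her
        exact hqedge e heq (harce e her)
    · intro hnil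
      have h0 : (q.append ((C.rotate u hu).takeUntil v hv1).reverse).length = 0 := by
        rw [hnil]; rfl
      rw [Walk.length_append] at h0
      have hqnil : ¬ q.Nil := Walk.not_nil_of_ne huv
      rw [Walk.nil_iff_length_eq] at hqnil
      omega
    · have hsplit : (q.append ((C.rotate u hu).takeUntil v hv1).reverse).support.tail =
          q.support.tail ++ ((C.rotate u hu).takeUntil v hv1).reverse.support.tail := by
        rw [Walk.support_append, q.support_eq_cons]
        rfl
      rw [hsplit]
      refine List.Nodup.append hq.support_nodup.tail harc.reverse.support_nodup.tail ?_
      intro y hyq hyr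
      have hyq' : y ∈ q.support := List.mem_of_mem_tail hyq
      have hyr' : y ∈ ((C.rotate u hu).takeUntil v hv1).support := by
        have := List.mem_of_mem_tail hyr
        rwa [Walk.support_reverse, List.mem_reverse] at this
      rcases hqsup y hyq' (harcsub y hyr') with hy | hy
      · -- y = u : but u is the head of q, not in its tail
        have hnd := hq.support_nodup
        rw [q.support_eq_cons] at hnd
        rw [hy] at hyq
        exact (List.nodup_cons.mp hnd).1 hyq
      · -- y = v : but v is the head of the reversed arc
        have hnd := harc.reverse.support_nodup
        rw [((C.rotate u hu).takeUntil v hv1).reverse.support_eq_cons] at hnd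
        rw [hy] at hyr
        exact (List.nodup_cons.mp hnd).1 hyr
  · rw [Walk.length_append]; omega

end EarHelpers


/-- In a greedy open ear decomposition of a minimally 2-connected graph, the
ears appear in order of nonincreasing length: each ear has at most as many
edges as the previous one. -/
theorem greedy_ears_length_antitone {V : Type*} (H : SimpleGraph V)
    (hmin : MinimallyTwoConnected H) {h : ℕ}
    (D : OpenEarDecomp H h) (hD : D.Greedy) :
    ∀ i : ℕ, ∀ hi : i + 1 < h + 1,
      (D.ear ⟨i + 1, hi⟩).length ≤ (D.ear ⟨i, by omega⟩).length := by
  classical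
  intro i hi
  have hjpos : 0 < ((⟨i + 1, hi⟩ : Fin (h + 1)) : ℕ) := Nat.succ_pos i
  obtain ⟨hsj, htj⟩ := D.ends_mem ⟨i + 1, hi⟩ hjpos
  have hqpath := D.ears_path ⟨i + 1, hi⟩ hjpos
  have hquv := D.ends_ne ⟨i + 1, hi⟩ hjpos
  rcases Nat.eq_zero_or_pos i with rfl | hipos
  · -- base case: the second ear is at most as long as the initial (longest) cycle
    have h0 : (⟨0, by omega⟩ : Fin (h + 1)) = 0 := by
      apply Fin.ext; simp
    rw [h0]
    have hmem1 : ∀ y, y ∈ (earPrefix D.ear 1).verts ↔ y ∈ (D.ear 0).support := by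
      intro y
      rw [mem_earPrefix_verts_iff]
      constructor
      · rintro ⟨k, hk, hyk⟩
        have hk0 : k = 0 := Fin.ext (show (k : ℕ) = (0 : Fin (h + 1)).val by rw [Fin.val_zero]; omega)
        rw [hk0] at hyk
        exact hyk
      · intro hy
        exact ⟨0, by simp, hy⟩
    obtain ⟨w, c, hc, hlen⟩ := cycleExtend D.first_cycle (D.ear ⟨0 + 1, hi⟩) hqpath hquv
      (by rw [Walk.support_copy]; exact (hmem1 _).1 hsj)
      (by rw [Walk.support_copy]; exact (hmem1 _).1 htj)
      (by
        intro y hy hyC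
        rw [Walk.support_copy] at hyC
        exact D.internal_disjoint ⟨0 + 1, hi⟩ hjpos y hy ((hmem1 y).2 hyC))
      (by
        intro e he hEC
        rw [Walk.edges_copy] at hEC
        exact D.edge_disjoint ⟨0 + 1, hi⟩ 0
          (Fin.ne_of_val_ne (show 0 + 1 ≠ ((0 : Fin (h + 1)) : ℕ) by simp)) e he hEC)
    exact hlen.trans (hD.1 w c hc)
  · -- inductive case
    have hii : i < h + 1 := by omega
    obtain ⟨hsi, hti⟩ := D.ends_mem ⟨i, hii⟩ hipos
    have hPpath := D.ears_path ⟨i, hii⟩ hipos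
    have hPuv := D.ends_ne ⟨i, hii⟩ hipos
    have hPint := D.internal_disjoint ⟨i, hii⟩ hipos
    have hA : ∀ y, y ∈ (earPrefix D.ear (i + 1)).verts ↔
        (y ∈ (earPrefix D.ear i).verts ∨ y ∈ (D.ear ⟨i, hii⟩).support) := by
      intro y
      rw [mem_earPrefix_verts_iff, mem_earPrefix_verts_iff]
      constructor
      · rintro ⟨k, hk, hyk⟩
        by_cases hki : (k : ℕ) < i
        · exact Or.inl ⟨k, hki, hyk⟩
        · have hkeq : k = ⟨i, hii⟩ := Fin.ext (show (k : ℕ) = i by omega)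
          rw [hkeq] at hyk
          exact Or.inr hyk
      · rintro (⟨k, hk, hyk⟩ | hy)
        · exact ⟨k, by omega, hyk⟩
        · exact ⟨⟨i, hii⟩, show i < i + 1 by omega, hy⟩
    obtain ⟨u', v', q', h1, h2, h3, h4, h5, h6, h7⟩ :=
      existsExtension (A := (earPrefix D.ear i).verts) (D.ear ⟨i, hii⟩) hPpath hPuv hsi hti hPint
        (D.ear ⟨i + 1, hi⟩) hqpath hquv
        (fun x hx hmem => D.internal_disjoint ⟨i + 1, hi⟩ hjpos x hx ((hA x).2 hmem))
        ((hA _).1 hsj) ((hA _).1 htj)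
    have hedge : ∀ e ∈ q'.edges, e ∉ (earPrefix D.ear i).edgeSet := by
      intro e he hmem
      obtain ⟨k, hk, hek⟩ := (mem_earPrefix_edges_iff D.ear i e).1 hmem
      rcases h6 e he with hq | hp
      · exact D.edge_disjoint ⟨i + 1, hi⟩ k
          (Fin.ne_of_val_ne (show i + 1 ≠ (k : ℕ) by omega)) e hq hek
      · exact D.edge_disjoint ⟨i, hii⟩ k
          (Fin.ne_of_val_ne (show i ≠ (k : ℕ) by omega)) e hp hek
    exact h7.trans (hD.2 ⟨i, hii⟩ hipos u' v' q' h1 h2 h3 h4 h5 hedge)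
end

section
/- Let H be a minimally 2-connected simple graph and let (P_1, …, P_h) be a greedy open ear decomposition of H. Then for every 2 ≤ i ≤ h, the two endpoints s_i and t_i of the ear P_i are not adjacent in the graph H_{i-1} = P_1 ∪ ⋯ ∪ P_{i-1}. -/
open SimpleGraph

section Aux

variable {V : Type*} {H : SimpleGraph V} {h : ℕ}

/-- Split a walk at an edge occurring in it. -/
lemma split_at_edge {G : SimpleGraph V} {u v a b : V} (w : G.Walk u v)
    (hw : s(a, b) ∈ w.edges) :
    (∃ (w1 : G.Walk u a) (w2 : G.Walk b v) (hab : G.Adj a b),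
      w = w1.append (Walk.cons hab w2)) ∨
    (∃ (w1 : G.Walk u b) (w2 : G.Walk a v) (hab : G.Adj b a),
      w = w1.append (Walk.cons hab w2)) := by
  induction w with
  | nil => simp at hw
  | @cons u x v hux p ih =>
    rw [Walk.edges_cons, List.mem_cons] at hw
    rcases hw with heq | hmem
    · rw [Sym2.eq_iff] at heq
      rcases heq with ⟨rfl, rfl⟩ | ⟨rfl, rfl⟩
      · exact Or.inl ⟨Walk.nil, p, hux, by rw [Walk.nil_append]⟩
      · exact Or.inr ⟨Walk.nil, p, hux, by rw [Walk.nil_append]⟩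
    · rcases ih hmem with ⟨w1, w2, hab, heq⟩ | ⟨w1, w2, hab, heq⟩
      · exact Or.inl ⟨Walk.cons hux w1, w2, hab, by rw [heq, Walk.cons_append]⟩
      · exact Or.inr ⟨Walk.cons hux w1, w2, hab, by rw [heq, Walk.cons_append]⟩

variable {s t : Fin (h + 1) → V} (ear : (i : Fin (h + 1)) → H.Walk (s i) (t i))

lemma mem_verts_earPrefix {k : ℕ} {x : V} :
    x ∈ (earPrefix ear k).verts ↔ ∃ j : Fin (h + 1), (j : ℕ) < k ∧ x ∈ (ear j).support := by
  unfold earPrefix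
  rw [Subgraph.verts_iSup]
  simp only [Set.mem_iUnion]
  constructor
  · rintro ⟨j, hj⟩
    by_cases hlt : (j : ℕ) < k
    · rw [if_pos hlt] at hj
      exact ⟨j, hlt, (Walk.mem_verts_toSubgraph _).1 hj⟩
    · rw [if_neg hlt] at hj
      simp [Subgraph.verts_bot] at hj
  · rintro ⟨j, hlt, hx⟩
    exact ⟨j, by rw [if_pos hlt]; exact (Walk.mem_verts_toSubgraph _).2 hx⟩

lemma mem_edgeSet_earPrefix {k : ℕ} {e : Sym2 V} :
    e ∈ (earPrefix ear k).edgeSet ↔ ∃ j : Fin (h + 1), (j : ℕ) < k ∧ e ∈ (ear j).edges := by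
  unfold earPrefix
  rw [Subgraph.edgeSet_iSup]
  simp only [Set.mem_iUnion]
  constructor
  · rintro ⟨j, hj⟩
    by_cases hlt : (j : ℕ) < k
    · rw [if_pos hlt] at hj
      exact ⟨j, hlt, (Walk.mem_edges_toSubgraph _).1 hj⟩
    · rw [if_neg hlt] at hj
      simp [Subgraph.edgeSet_bot] at hj
  · rintro ⟨j, hlt, hx⟩
    exact ⟨j, by rw [if_pos hlt]; exact (Walk.mem_edges_toSubgraph _).2 hx⟩

lemma adj_earPrefix {k : ℕ} {x y : V} (hadj : (earPrefix ear k).Adj x y) :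
    ∃ j : Fin (h + 1), (j : ℕ) < k ∧ s(x, y) ∈ (ear j).edges := by
  have : s(x, y) ∈ (earPrefix ear k).edgeSet := Subgraph.mem_edgeSet.2 hadj
  exact (mem_edgeSet_earPrefix ear).1 this

lemma two_le_length {G : SimpleGraph V} {u v : V} (w : G.Walk u v) (huv : u ≠ v)
    (hw : s(u, v) ∉ w.edges) : 2 ≤ w.length := by
  cases w with
  | nil => exact absurd rfl huv
  | cons hux p =>
    cases p with
    | nil => simp at hw
    | cons h' p' => simp [Walk.length_cons]

end Aux

section Core

variable {V : Type*} {H : SimpleGraph V} {h : ℕ}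

lemma core (D : OpenEarDecomp H h) (hD : D.Greedy)
    (i j : Fin (h + 1)) (hi : 0 < (i : ℕ)) (hji : (j : ℕ) < (i : ℕ))
    {a b : V} (P : H.Walk a b) (hP : P.IsPath) (hlen : 2 ≤ P.length)
    (hint : ∀ x ∈ P.support, x ∈ (earPrefix D.ear (i : ℕ)).verts → x = a ∨ x = b)
    (hPe : ∀ e ∈ P.edges, e ∈ (D.ear i).edges)
    (w1 : H.Walk (D.s j) a) (w2 : H.Walk b (D.t j)) (hadj : H.Adj a b)
    (heq : D.ear j = w1.append (Walk.cons hadj w2)) : False := by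
  classical
  have hsupp : (D.ear j).support = w1.support ++ w2.support := by
    rw [heq, Walk.support_append, Walk.support_cons, List.tail_cons]
  have hedges : (D.ear j).edges = w1.edges ++ (s(a, b) :: w2.edges) := by
    rw [heq, Walk.edges_append, Walk.edges_cons]
  have hlenj : (D.ear j).length = w1.length + (w2.length + 1) := by
    rw [heq, Walk.length_append, Walk.length_cons]
  have haw : a ∈ (D.ear j).support := by
    rw [hsupp]; exact List.mem_append_left _ (Walk.end_mem_support w1)
  have hbw : b ∈ (D.ear j).support := by
    rw [hsupp]; exact List.mem_append_right _ (Walk.start_mem_support w2)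
  have hsub : ∀ x ∈ (D.ear j).support, x ∈ (earPrefix D.ear (i : ℕ)).verts :=
    fun x hx => (mem_verts_earPrefix D.ear).2 ⟨j, hji, hx⟩
  have hnota : a ∉ P.support.tail := by
    have hnd := hP.support_nodup
    rw [Walk.support_eq_cons] at hnd
    exact (List.nodup_cons.1 hnd).1
  have hkey : ∀ x ∈ P.support.tail, x ∈ (D.ear j).support → x = b := by
    intro x hx hxw
    rcases hint x (List.mem_of_mem_tail hx) (hsub x hxw) with rfl | rfl
    · exact absurd hx hnota
    · rfl
  set q : H.Walk (D.s j) (D.t j) := w1.append (P.append w2) with hq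
  have hqsupp : q.support = w1.support ++ (P.support.tail ++ w2.support.tail) := by
    rw [hq, Walk.support_append, Walk.tail_support_append]
  have hqedges : q.edges = w1.edges ++ (P.edges ++ w2.edges) := by
    rw [hq, Walk.edges_append, Walk.edges_append]
  have hqlen : q.length = w1.length + (P.length + w2.length) := by
    rw [hq, Walk.length_append, Walk.length_append]
  have hPtail : P.support.tail.Nodup := hP.support_nodup.tail
  by_cases hj0 : (j : ℕ) = 0
  · -- cycle case
    have hj00 : j = 0 := by
      apply Fin.ext; simpa using hj0
    subst hj00
    have hcE : (D.ear 0).edges.Nodup := by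
      have := D.first_cycle.edges_nodup
      rwa [Walk.edges_copy] at this
    have hcS : (D.ear 0).support.tail.Nodup := by
      have := D.first_cycle.support_nodup
      rwa [Walk.support_copy] at this
    have htail : (D.ear 0).support.tail = w1.support.tail ++ w2.support := by
      rw [hsupp, Walk.support_eq_cons w1, List.cons_append, List.tail_cons]
      rfl
    rw [htail, List.nodup_append'] at hcS
    obtain ⟨h1nd, h2nd, hdisjS⟩ := hcS
    have hbnotw1t : b ∉ w1.support.tail := fun hb => hdisjS hb (Walk.start_mem_support w2)
    have hbnotw2t : b ∉ w2.support.tail := by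
      have := h2nd
      rw [Walk.support_eq_cons w2] at this
      exact (List.nodup_cons.1 this).1
    rw [hedges, List.nodup_append'] at hcE
    obtain ⟨he1, he2', hedisj⟩ := hcE
    have he2 : w2.edges.Nodup := (List.nodup_cons.1 he2').2
    have hi0 : i ≠ 0 := by
      intro hh; rw [hh] at hi; simp at hi
    have hPnotear0 : ∀ e ∈ P.edges, e ∉ (D.ear 0).edges := by
      intro e he
      exact D.edge_disjoint i 0 hi0 e (hPe e he)
    set C : H.Walk (D.s 0) (D.s 0) := q.copy rfl D.first_closed.symm with hC
    have hCcyc : C.IsCycle := by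
      refine ⟨⟨⟨?_⟩, ?_⟩, ?_⟩
      · -- edges nodup
        rw [hC, Walk.edges_copy, hqedges, List.nodup_append']
        refine ⟨he1, ?_, ?_⟩
        · rw [List.nodup_append']
          refine ⟨hP.edges_nodup, he2, ?_⟩
          intro e heP hew2
          exact hPnotear0 e heP (by rw [hedges]; exact List.mem_append_right _ (List.mem_cons_of_mem _ hew2))
        · intro e hew1 he'
          rcases List.mem_append.1 he' with heP | hew2
          · exact hPnotear0 e heP (by rw [hedges]; exact List.mem_append_left _ hew1)
          · exact hedisj hew1 (List.mem_cons_of_mem _ hew2)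
      · -- ne nil
        intro hn
        have : C.length = 0 := by rw [hn]; rfl
        rw [hC, Walk.length_copy, hqlen] at this
        omega
      · -- support tail nodup
        have hCtail : C.support.tail = w1.support.tail ++ (P.support.tail ++ w2.support.tail) := by
          rw [hC, Walk.support_copy, hqsupp, Walk.support_eq_cons w1, List.cons_append,
            List.tail_cons]
          rfl
        rw [hCtail, List.nodup_append']
        refine ⟨h1nd, ?_, ?_⟩
        · rw [List.nodup_append']
          refine ⟨hPtail, h2nd.tail, ?_⟩
          intro x hxP hxw2
          have hxb : x = b := hkey x hxP (by
            rw [hsupp]; exact List.mem_append_right _ (List.mem_of_mem_tail hxw2))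
          exact hbnotw2t (hxb ▸ hxw2)
        · intro x hxw1 hx'
          rcases List.mem_append.1 hx' with hxP | hxw2
          · have hxb : x = b := hkey x hxP (by
              rw [hsupp]; exact List.mem_append_left _ (List.mem_of_mem_tail hxw1))
            exact hbnotw1t (hxb ▸ hxw1)
          · exact hdisjS hxw1 (List.mem_of_mem_tail hxw2)
    have hle := hD.1 (D.s 0) C hCcyc
    rw [hC, Walk.length_copy, hqlen, hlenj] at hle
    omega
  · -- path case
    have hj : 0 < (j : ℕ) := Nat.pos_of_ne_zero hj0
    have hjpath := D.ears_path j hj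
    have hwnodup : (w1.support ++ w2.support).Nodup := hsupp ▸ hjpath.support_nodup
    rw [List.nodup_append'] at hwnodup
    obtain ⟨h1nd, h2nd, hdisj⟩ := hwnodup
    have hbnotw1 : b ∉ w1.support := fun hb => hdisj hb (Walk.start_mem_support w2)
    have hbnotw2t : b ∉ w2.support.tail := by
      have := h2nd
      rw [Walk.support_eq_cons w2] at this
      exact (List.nodup_cons.1 this).1
    have hqpath : q.IsPath := by
      apply Walk.IsPath.mk'
      rw [hqsupp, List.nodup_append']
      refine ⟨h1nd, ?_, ?_⟩
      · rw [List.nodup_append']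
        refine ⟨hPtail, h2nd.tail, ?_⟩
        intro x hxP hxw2
        have hxb : x = b := hkey x hxP (by
          rw [hsupp]; exact List.mem_append_right _ (List.mem_of_mem_tail hxw2))
        exact hbnotw2t (hxb ▸ hxw2)
      · intro x hxw1 hx'
        rcases List.mem_append.1 hx' with hxP | hxw2
        · have hxb : x = b := hkey x hxP (by
            rw [hsupp]; exact List.mem_append_left _ hxw1)
          exact hbnotw1 (hxb ▸ hxw1)
        · exact hdisj hxw1 (List.mem_of_mem_tail hxw2)
    have hq_int : ∀ x ∈ q.support, x ∈ (earPrefix D.ear (j : ℕ)).verts →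
        x = D.s j ∨ x = D.t j := by
      intro x hxq hxpre
      have hxcase : x ∈ (D.ear j).support ∨ x ∈ P.support := by
        rw [hqsupp] at hxq
        rcases List.mem_append.1 hxq with hx1 | hx'
        · exact Or.inl (by rw [hsupp]; exact List.mem_append_left _ hx1)
        · rcases List.mem_append.1 hx' with hxP | hxw2
          · exact Or.inr (List.mem_of_mem_tail hxP)
          · exact Or.inl (by
              rw [hsupp]; exact List.mem_append_right _ (List.mem_of_mem_tail hxw2))
      rcases hxcase with hxw | hxP
      · exact D.internal_disjoint j hj x hxw hxpre
      · have hxpre' : x ∈ (earPrefix D.ear (i : ℕ)).verts := by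
          obtain ⟨k, hk, hxk⟩ := (mem_verts_earPrefix D.ear).1 hxpre
          exact (mem_verts_earPrefix D.ear).2 ⟨k, lt_trans hk hji, hxk⟩
        rcases hint x hxP hxpre' with rfl | rfl
        · exact D.internal_disjoint j hj x haw hxpre
        · exact D.internal_disjoint j hj x hbw hxpre
    have hq_edges : ∀ e ∈ q.edges, e ∉ (earPrefix D.ear (j : ℕ)).edgeSet := by
      intro e he hepre
      obtain ⟨k, hkj, hek⟩ := (mem_edgeSet_earPrefix D.ear).1 hepre
      have hjk : j ≠ k := by intro hh; rw [hh] at hkj; exact lt_irrefl _ hkj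
      have hik : i ≠ k := by
        intro hh
        rw [hh] at hji
        omega
      rw [hqedges] at he
      rcases List.mem_append.1 he with he1 | he'
      · exact D.edge_disjoint j k hjk e
          (by rw [hedges]; exact List.mem_append_left _ he1) hek
      · rcases List.mem_append.1 he' with heP | he2
        · exact D.edge_disjoint i k hik e (hPe e heP) hek
        · exact D.edge_disjoint j k hjk e
            (by rw [hedges]; exact List.mem_append_right _ (List.mem_cons_of_mem _ he2)) hek
    have hle := hD.2 j hj (D.s j) (D.t j) q hqpath (D.ends_ne j hj)
      (D.ends_mem j hj).1 (D.ends_mem j hj).2 hq_int hq_edges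
    rw [hqlen, hlenj] at hle
    omega

end Core


/-- In a greedy open ear decomposition of a minimally 2-connected graph, the
endpoints `s_i` and `t_i` of each ear `P_i` (`i ≥ 2`) are not adjacent in the
graph `H_{i-1} = P₁ ∪ ⋯ ∪ P_{i-1}`. -/
theorem greedy_ear_endpoints_not_adjacent {V : Type*} (H : SimpleGraph V)
    (hmin : MinimallyTwoConnected H) {h : ℕ}
    (D : OpenEarDecomp H h) (hD : D.Greedy) :
    ∀ i : Fin (h + 1), 0 < (i : ℕ) →
      ¬ (earPrefix D.ear i).Adj (D.s i) (D.t i) := by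
  intro i hi hadj
  obtain ⟨j, hji, hedge⟩ := adj_earPrefix D.ear hadj
  have hij : i ≠ j := by
    intro hh; rw [hh] at hji; exact lt_irrefl _ hji
  have hnotmem : s(D.s i, D.t i) ∉ (D.ear i).edges :=
    fun hmem => D.edge_disjoint i j hij _ hmem hedge
  have hlen : 2 ≤ (D.ear i).length := two_le_length _ (D.ends_ne i hi) hnotmem
  rcases split_at_edge (D.ear j) hedge with ⟨w1, w2, hab, heq⟩ | ⟨w1, w2, hab, heq⟩
  · exact core D hD i j hi hji (D.ear i) (D.ears_path i hi) hlen
      (D.internal_disjoint i hi) (fun e he => he) w1 w2 hab heq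
  · refine core D hD i j hi hji (D.ear i).reverse ((D.ears_path i hi).reverse) ?_ ?_ ?_
      w1 w2 hab heq
    · rwa [Walk.length_reverse]
    · intro x hx hxpre
      rw [Walk.support_reverse, List.mem_reverse] at hx
      exact (D.internal_disjoint i hi x hx hxpre).symm
    · intro e he
      rwa [Walk.edges_reverse, List.mem_reverse] at he
end

section
/- Let H be a minimally 2-connected simple graph and let (P_1, …, P_h) be a greedy open ear decomposition of H. Let P_i and P_j be ears with j < i such that either both P_i and P_j have exactly two edges or both have exactly three edges. Then no endpoint of P_i is an internal vertex of P_j. -/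
open SimpleGraph

open SimpleGraph

section WalkAux

variable {V : Type*} {H : SimpleGraph V}

lemma walk_length_pos {u v : V} (q : H.Walk u v) (hne : u ≠ v) : 1 ≤ q.length := by
  cases q with
  | nil => exact absurd rfl hne
  | cons _ _ => simp [Walk.length_cons]

lemma isPath_append {a b c : V} {p : H.Walk a b} {q : H.Walk b c} (hp : p.IsPath)
    (hq : q.IsPath) (hd : ∀ z, z ∈ p.support → z ∈ q.support → z = b) :
    (p.append q).IsPath := by
  rw [Walk.isPath_def, Walk.support_append]
  have hqt : q.support.tail.Nodup := by
    have := hq.support_nodup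
    rw [Walk.support_eq_cons] at this
    exact (List.nodup_cons.mp this).2
  have hbq : b ∉ q.support.tail := by
    have := hq.support_nodup
    rw [Walk.support_eq_cons] at this
    exact (List.nodup_cons.mp this).1
  refine List.Nodup.append hp.support_nodup hqt ?_
  intro z hzp hzt
  have hzq : z ∈ q.support := by
    rw [Walk.support_eq_cons]
    exact List.mem_cons_of_mem _ hzt
  have hzb := hd z hzp hzq
  subst hzb
  exact hbq hzt

lemma takeUntil_dropUntil_inter [DecidableEq V] {a b u z : V} {p : H.Walk a b}
    (hp : p.IsPath) (hu : u ∈ p.support) (h1 : z ∈ (p.takeUntil u hu).support)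
    (h2 : z ∈ (p.dropUntil u hu).support) : z = u := by
  by_contra hne
  have hnd : ((p.takeUntil u hu).append (p.dropUntil u hu)).support.Nodup := by
    rw [Walk.take_spec]; exact hp.support_nodup
  rw [Walk.support_append] at hnd
  have h2' : z ∈ (p.dropUntil u hu).support.tail := by
    have hc := Walk.support_eq_cons (p.dropUntil u hu)
    rw [hc] at h2
    rcases List.mem_cons.mp h2 with h | h
    · exact absurd h hne
    · exact h
  exact (List.disjoint_of_nodup_append hnd) h1 h2'

lemma end_not_mem_takeUntil [DecidableEq V] {a b v : V} {p : H.Walk a b} (hp : p.IsPath)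
    (hv : v ∈ p.support) (hne : v ≠ b) : b ∉ (p.takeUntil v hv).support := fun hbt =>
  hne ((takeUntil_dropUntil_inter hp hv hbt (Walk.end_mem_support _)).symm)

lemma start_not_mem_dropUntil [DecidableEq V] {a b v : V} {p : H.Walk a b} (hp : p.IsPath)
    (hv : v ∈ p.support) (hne : v ≠ a) : a ∉ (p.dropUntil v hv).support := fun had =>
  hne ((takeUntil_dropUntil_inter hp hv (Walk.start_mem_support _) had).symm)

lemma triangle_edge {a : V} (p : H.Walk a a) (hc : p.IsCycle) (h3 : p.length = 3)
    {u v : V} (hu : u ∈ p.support) (hv : v ∈ p.support) (huv : u ≠ v) :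
    s(u, v) ∈ p.edges := by
  cases p with
  | nil => simp at h3
  | cons h1 p =>
    cases p with
    | nil => simp at h3
    | cons h2 p =>
      cases p with
      | nil => simp at h3
      | cons h3' p =>
        cases p with
        | cons h4 p => simp [Walk.length_cons] at h3
        | nil =>
          have hnd := hc.support_nodup
          simp only [Walk.support_cons, Walk.support_nil, List.tail_cons] at hnd
          simp only [Walk.support_cons, Walk.support_nil, List.mem_cons,
            List.not_mem_nil, or_false] at hu hv
          simp only [Walk.edges_cons, Walk.edges_nil, List.mem_cons, List.not_mem_nil,
            or_false, Sym2.eq_iff]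
          simp only [List.nodup_cons, List.mem_cons, List.not_mem_nil, or_false,
            List.mem_singleton, List.nodup_nil, and_true, not_or] at hnd
          rcases hu with rfl | rfl | rfl | rfl <;> rcases hv with rfl | rfl | rfl | rfl <;>
            tauto

end WalkAux


section DecompAux

variable {V : Type*} {H : SimpleGraph V} {h : ℕ}

lemma mem_earPrefix_verts (D : OpenEarDecomp H h) {k : ℕ} {z : V} :
    z ∈ (earPrefix D.ear k).verts ↔
      ∃ m : Fin (h + 1), (m : ℕ) < k ∧ z ∈ (D.ear m).support := by
  unfold earPrefix
  rw [Subgraph.verts_iSup]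
  simp only [Set.mem_iUnion]
  constructor
  · rintro ⟨m, hm⟩
    by_cases hmk : (m : ℕ) < k
    · rw [if_pos hmk] at hm
      exact ⟨m, hmk, (Walk.mem_verts_toSubgraph _).1 hm⟩
    · rw [if_neg hmk] at hm
      simp [Subgraph.verts_bot] at hm
  · rintro ⟨m, hmk, hms⟩
    exact ⟨m, by rw [if_pos hmk]; exact (Walk.mem_verts_toSubgraph _).2 hms⟩

lemma mem_earPrefix_edges (D : OpenEarDecomp H h) {k : ℕ} {e : Sym2 V} :
    e ∈ (earPrefix D.ear k).edgeSet ↔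
      ∃ m : Fin (h + 1), (m : ℕ) < k ∧ e ∈ (D.ear m).edges := by
  unfold earPrefix
  rw [Subgraph.edgeSet_iSup]
  simp only [Set.mem_iUnion]
  constructor
  · rintro ⟨m, hm⟩
    by_cases hmk : (m : ℕ) < k
    · rw [if_pos hmk] at hm
      exact ⟨m, hmk, (Walk.mem_edges_toSubgraph _).1 hm⟩
    · rw [if_neg hmk] at hm
      simp [Subgraph.edgeSet_bot] at hm
  · rintro ⟨m, hmk, hms⟩
    exact ⟨m, by rw [if_pos hmk]; exact (Walk.mem_edges_toSubgraph _).2 hms⟩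

lemma earPrefix_verts_mono (D : OpenEarDecomp H h) {k l : ℕ} (hkl : k ≤ l) {z : V}
    (hz : z ∈ (earPrefix D.ear k).verts) : z ∈ (earPrefix D.ear l).verts := by
  rw [mem_earPrefix_verts] at hz ⊢
  obtain ⟨m, h1, h2⟩ := hz
  exact ⟨m, lt_of_lt_of_le h1 hkl, h2⟩

lemma earPrefix_edges_mono (D : OpenEarDecomp H h) {k l : ℕ} (hkl : k ≤ l) {e : Sym2 V}
    (he : e ∈ (earPrefix D.ear k).edgeSet) : e ∈ (earPrefix D.ear l).edgeSet := by
  rw [mem_earPrefix_edges] at he ⊢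
  obtain ⟨m, h1, h2⟩ := he
  exact ⟨m, lt_of_lt_of_le h1 hkl, h2⟩

lemma ear_support_mem_prefix (D : OpenEarDecomp H h) {k : Fin (h + 1)} {n : ℕ}
    (hn : (k : ℕ) < n) {z : V} (hz : z ∈ (D.ear k).support) :
    z ∈ (earPrefix D.ear n).verts :=
  (mem_earPrefix_verts D).2 ⟨k, hn, hz⟩

lemma ear_edge_not_prefix (D : OpenEarDecomp H h) {k : Fin (h + 1)} {e : Sym2 V}
    (he : e ∈ (D.ear k).edges) {n : ℕ} (hn : n ≤ (k : ℕ)) :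
    e ∉ (earPrefix D.ear n).edgeSet := by
  rw [mem_earPrefix_edges]
  rintro ⟨m, hmn, hme⟩
  exact D.edge_disjoint k m (by
    intro hkm
    rw [hkm] at hn
    omega) e he hme

/-- `q` is an admissible ear at step `k`. -/
def Adm (D : OpenEarDecomp H h) (k : ℕ) {u v : V} (q : H.Walk u v) : Prop :=
  q.IsPath ∧ u ≠ v ∧ u ∈ (earPrefix D.ear k).verts ∧ v ∈ (earPrefix D.ear k).verts ∧
    (∀ z ∈ q.support, z ∈ (earPrefix D.ear k).verts → z = u ∨ z = v) ∧
    ∀ e ∈ q.edges, e ∉ (earPrefix D.ear k).edgeSet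

lemma adm_le {D : OpenEarDecomp H h} (hD : D.Greedy) {k : Fin (h + 1)} (hk : 0 < (k : ℕ))
    {u v : V} {q : H.Walk u v} (hq : Adm D ↑k q) : q.length ≤ (D.ear k).length :=
  hD.2 k hk u v q hq.1 hq.2.1 hq.2.2.1 hq.2.2.2.1 hq.2.2.2.2.1 hq.2.2.2.2.2

lemma ear_adm (D : OpenEarDecomp H h) (k : Fin (h + 1)) (hk : 0 < (k : ℕ)) :
    Adm D ↑k (D.ear k) :=
  ⟨D.ears_path k hk, D.ends_ne k hk, (D.ends_mem k hk).1, (D.ends_mem k hk).2,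
    fun z hz hzv => D.internal_disjoint k hk z hz hzv,
    fun _ he => ear_edge_not_prefix D he le_rfl⟩

lemma seg (D : OpenEarDecomp H h) (k : Fin (h + 1)) (hk : 0 < (k : ℕ)) {u : V}
    (hu : u ∈ (D.ear k).support) (hun : u ∉ (earPrefix D.ear ↑k).verts) (e : V)
    (he : e = D.s k ∨ e = D.t k) :
    ∃ S : H.Walk e u, S.IsPath ∧ 1 ≤ S.length ∧
      (∀ z ∈ S.support, z ∈ (D.ear k).support) ∧
      (∀ z ∈ S.support, z ∈ (earPrefix D.ear ↑k).verts → z = e) ∧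
      (∀ ed ∈ S.edges, ed ∈ (D.ear k).edges) := by
  classical
  have hP := D.ears_path k hk
  have hsmem : D.s k ∈ (earPrefix D.ear ↑k).verts := (D.ends_mem k hk).1
  have htmem : D.t k ∈ (earPrefix D.ear ↑k).verts := (D.ends_mem k hk).2
  have hus : u ≠ D.s k := fun hh => hun (hh ▸ hsmem)
  have hut : u ≠ D.t k := fun hh => hun (hh ▸ htmem)
  rcases he with rfl | rfl
  · refine ⟨(D.ear k).takeUntil u hu, hP.takeUntil hu, ?_, ?_, ?_, ?_⟩
    · exact walk_length_pos _ (Ne.symm hus)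
    · exact fun z hz => Walk.support_takeUntil_subset _ hu hz
    · intro z hz hzv
      rcases D.internal_disjoint k hk z (Walk.support_takeUntil_subset _ hu hz) hzv with
        h1 | h1
      · exact h1
      · exact absurd (h1 ▸ hz) (end_not_mem_takeUntil hP hu hut)
    · exact fun ed hed => Walk.edges_takeUntil_subset _ hu hed
  · refine ⟨((D.ear k).dropUntil u hu).reverse, (hP.dropUntil hu).reverse, ?_, ?_, ?_, ?_⟩
    · exact walk_length_pos _ (Ne.symm hut)
    · intro z hz
      rw [Walk.support_reverse, List.mem_reverse] at hz
      exact Walk.support_dropUntil_subset _ hu hz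
    · intro z hz hzv
      rw [Walk.support_reverse, List.mem_reverse] at hz
      rcases D.internal_disjoint k hk z (Walk.support_dropUntil_subset _ hu hz) hzv with
        h1 | h1
      · exact absurd (h1 ▸ hz) (start_not_mem_dropUntil hP hu hus)
      · exact h1
    · intro ed hed
      rw [Walk.edges_reverse, List.mem_reverse] at hed
      exact Walk.edges_dropUntil_subset _ hu hed

end DecompAux


section Glue

variable {V : Type*} {H : SimpleGraph V} {h : ℕ}

lemma glue1 (D : OpenEarDecomp H h) (k : Fin (h + 1)) (hk : 0 < (k : ℕ)) {u v : V}
    (hu : u ∈ (D.ear k).support) (hun : u ∉ (earPrefix D.ear ↑k).verts)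
    (hv : v ∈ (earPrefix D.ear ↑k).verts) (q : H.Walk u v) (hq : q.IsPath)
    (hsupp : ∀ z ∈ q.support, z ∈ (earPrefix D.ear ((k : ℕ) + 1)).verts → z = u ∨ z = v)
    (hedge : ∀ e ∈ q.edges, e ∉ (earPrefix D.ear ((k : ℕ) + 1)).edgeSet) :
    ∃ (a b : V) (q' : H.Walk a b), Adm D ↑k q' ∧ q.length + 1 ≤ q'.length := by
  classical
  have hst := D.ends_ne k hk
  set e : V := if v = D.s k then D.t k else D.s k with hedef
  have he : e = D.s k ∨ e = D.t k := by
    by_cases hh : v = D.s k <;> simp [hedef, hh]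
  have hev : e ≠ v := by
    rw [hedef]
    split_ifs with hh
    · rw [hh]; exact Ne.symm hst
    · exact fun h2 => hh h2.symm
  obtain ⟨S, hSp, hSlen, hSsub, hScond, hSedge⟩ := seg D k hk hu hun e he
  have heG : e ∈ (earPrefix D.ear ↑k).verts := by
    rcases he with h1 | h1 <;> rw [h1]
    · exact (D.ends_mem k hk).1
    · exact (D.ends_mem k hk).2
  have hdisj : ∀ z, z ∈ S.support → z ∈ q.support → z = u := by
    intro z hzS hzq
    have hz1 : z ∈ (earPrefix D.ear ((k : ℕ) + 1)).verts :=
      ear_support_mem_prefix D (Nat.lt_succ_self _) (hSsub z hzS)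
    rcases hsupp z hzq hz1 with h1 | h1
    · exact h1
    · subst h1
      exact absurd (hScond z hzS hv) hev.symm
  refine ⟨e, v, S.append q, ⟨isPath_append hSp hq hdisj, hev, heG, hv, ?_, ?_⟩, ?_⟩
  · intro z hz hzk
    rw [Walk.mem_support_append_iff] at hz
    rcases hz with hz | hz
    · exact Or.inl (hScond z hz hzk)
    · rcases hsupp z hz (earPrefix_verts_mono D (Nat.le_succ _) hzk) with h1 | h1
      · exact absurd (h1 ▸ hzk) hun
      · exact Or.inr h1
  · intro ed hed
    rw [Walk.edges_append, List.mem_append] at hed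
    rcases hed with hed | hed
    · exact ear_edge_not_prefix D (hSedge ed hed) le_rfl
    · exact fun hek => hedge ed hed (earPrefix_edges_mono D (Nat.le_succ _) hek)
  · rw [Walk.length_append]; omega

lemma glue2 (D : OpenEarDecomp H h) (k : Fin (h + 1)) (hk : 0 < (k : ℕ)) {u v : V}
    (hu : u ∈ (D.ear k).support) (hun : u ∉ (earPrefix D.ear ↑k).verts)
    (hv : v ∈ (D.ear k).support) (hvn : v ∉ (earPrefix D.ear ↑k).verts)
    (huv : u ≠ v) (q : H.Walk u v) (hq : q.IsPath)
    (hsupp : ∀ z ∈ q.support, z ∈ (earPrefix D.ear ((k : ℕ) + 1)).verts → z = u ∨ z = v)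
    (hedge : ∀ e ∈ q.edges, e ∉ (earPrefix D.ear ((k : ℕ) + 1)).edgeSet) :
    ∃ (a b : V) (q' : H.Walk a b), Adm D ↑k q' ∧ q.length + 2 ≤ q'.length := by
  classical
  have hP := D.ears_path k hk
  have hst := D.ends_ne k hk
  have hsG := (D.ends_mem k hk).1
  have htG := (D.ends_mem k hk).2
  have hsu : D.s k ≠ u := fun hh => hun (hh ▸ hsG)
  have htu : D.t k ≠ u := fun hh => hun (hh ▸ htG)
  have hsv : D.s k ≠ v := fun hh => hvn (hh ▸ hsG)
  have htv : D.t k ≠ v := fun hh => hvn (hh ▸ htG)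
  set T := (D.ear k).takeUntil u hu with hTdef
  set Dw := (D.ear k).dropUntil u hu with hDdef
  have hTp : T.IsPath := hP.takeUntil hu
  have hDp : Dw.IsPath := hP.dropUntil hu
  have hTsub : T.support ⊆ (D.ear k).support := Walk.support_takeUntil_subset _ hu
  have hDsub : Dw.support ⊆ (D.ear k).support := Walk.support_dropUntil_subset _ hu
  have hTed : T.edges ⊆ (D.ear k).edges := Walk.edges_takeUntil_subset _ hu
  have hDed : Dw.edges ⊆ (D.ear k).edges := Walk.edges_dropUntil_subset _ hu
  have htkT : D.t k ∉ T.support := end_not_mem_takeUntil hP hu (Ne.symm htu)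
  have hskD : D.s k ∉ Dw.support := start_not_mem_dropUntil hP hu (Ne.symm hsu)
  have memk1 : ∀ {z : V}, z ∈ (D.ear k).support →
      z ∈ (earPrefix D.ear ((k : ℕ) + 1)).verts := fun hz =>
    ear_support_mem_prefix D (Nat.lt_succ_self _) hz
  have Tcond : ∀ z ∈ T.support, z ∈ (earPrefix D.ear ↑k).verts → z = D.s k := by
    intro z hz hzv
    rcases D.internal_disjoint k hk z (hTsub hz) hzv with h1 | h1
    · exact h1
    · exact absurd (h1 ▸ hz) htkT
  have Dcond : ∀ z ∈ Dw.support, z ∈ (earPrefix D.ear ↑k).verts → z = D.t k := by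
    intro z hz hzv
    rcases D.internal_disjoint k hk z (hDsub hz) hzv with h1 | h1
    · exact absurd (h1 ▸ hz) hskD
    · exact h1
  by_cases hvT : v ∈ T.support
  · -- v lies before u on the ear
    set A := T.takeUntil v hvT with hAdef
    have hAp : A.IsPath := hTp.takeUntil hvT
    have hAsubT : A.support ⊆ T.support := Walk.support_takeUntil_subset _ hvT
    have huA : u ∉ A.support := end_not_mem_takeUntil hTp hvT (Ne.symm huv)
    have hvD : v ∉ Dw.support := fun hh =>
      huv ((takeUntil_dropUntil_inter hP hu hvT hh).symm)
    have hMCp : (q.reverse.append Dw).IsPath := by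
      refine isPath_append hq.reverse hDp ?_
      intro z hz1 hz2
      rw [Walk.support_reverse, List.mem_reverse] at hz1
      rcases hsupp z hz1 (memk1 (hDsub hz2)) with h1 | h1
      · exact h1
      · exact absurd (h1 ▸ hz2) hvD
    have hq'p : (A.append (q.reverse.append Dw)).IsPath := by
      refine isPath_append hAp hMCp ?_
      intro z hz1 hz2
      rw [Walk.mem_support_append_iff] at hz2
      rcases hz2 with hz2 | hz2
      · rw [Walk.support_reverse, List.mem_reverse] at hz2
        rcases hsupp z hz2 (memk1 (hTsub (hAsubT hz1))) with h1 | h1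
        · exact absurd (h1 ▸ hz1) huA
        · exact h1
      · exact absurd ((takeUntil_dropUntil_inter hP hu (hAsubT hz1) hz2) ▸ hz1) huA
    refine ⟨D.s k, D.t k, A.append (q.reverse.append Dw), ⟨hq'p, hst, hsG, htG, ?_, ?_⟩, ?_⟩
    · intro z hz hzk
      rw [Walk.mem_support_append_iff, Walk.mem_support_append_iff] at hz
      rcases hz with hz | hz | hz
      · exact Or.inl (Tcond z (hAsubT hz) hzk)
      · rw [Walk.support_reverse, List.mem_reverse] at hz
        rcases hsupp z hz (earPrefix_verts_mono D (Nat.le_succ _) hzk) with h1 | h1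
        · exact absurd (h1 ▸ hzk) hun
        · exact absurd (h1 ▸ hzk) hvn
      · exact Or.inr (Dcond z hz hzk)
    · intro ed hed
      rw [Walk.edges_append, Walk.edges_append, List.mem_append, List.mem_append] at hed
      rcases hed with hed | hed | hed
      · exact ear_edge_not_prefix D (hTed (Walk.edges_takeUntil_subset _ hvT hed)) le_rfl
      · rw [Walk.edges_reverse, List.mem_reverse] at hed
        exact fun hek => hedge ed hed (earPrefix_edges_mono D (Nat.le_succ _) hek)
      · exact ear_edge_not_prefix D (hDed hed) le_rfl
    · rw [Walk.length_append, Walk.length_append, Walk.length_reverse]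
      have h1 : 1 ≤ A.length := walk_length_pos _ hsv
      have h2 : 1 ≤ Dw.length := walk_length_pos _ (Ne.symm htu)
      omega
  · -- v lies after u on the ear
    have hvD : v ∈ Dw.support := by
      have hv' := hv
      rw [← Walk.take_spec (D.ear k) hu, Walk.mem_support_append_iff] at hv'
      tauto
    set C := Dw.dropUntil v hvD with hCdef
    have hCp : C.IsPath := hDp.dropUntil hvD
    have hCsub : C.support ⊆ Dw.support := Walk.support_dropUntil_subset _ hvD
    have huC : u ∉ C.support := start_not_mem_dropUntil hDp hvD (Ne.symm huv)
    have hMCp : (q.append C).IsPath := by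
      refine isPath_append hq hCp ?_
      intro z hz1 hz2
      rcases hsupp z hz1 (memk1 (hDsub (hCsub hz2))) with h1 | h1
      · exact absurd (h1 ▸ hz2) huC
      · exact h1
    have hq'p : (T.append (q.append C)).IsPath := by
      refine isPath_append hTp hMCp ?_
      intro z hz1 hz2
      rw [Walk.mem_support_append_iff] at hz2
      rcases hz2 with hz2 | hz2
      · rcases hsupp z hz2 (memk1 (hTsub hz1)) with h1 | h1
        · exact h1
        · exact absurd (h1 ▸ hz1) hvT
      · have := takeUntil_dropUntil_inter hP hu hz1 (hCsub hz2)
        subst this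
        exact absurd hz2 huC
    refine ⟨D.s k, D.t k, T.append (q.append C), ⟨hq'p, hst, hsG, htG, ?_, ?_⟩, ?_⟩
    · intro z hz hzk
      rw [Walk.mem_support_append_iff, Walk.mem_support_append_iff] at hz
      rcases hz with hz | hz | hz
      · exact Or.inl (Tcond z hz hzk)
      · rcases hsupp z hz (earPrefix_verts_mono D (Nat.le_succ _) hzk) with h1 | h1
        · exact absurd (h1 ▸ hzk) hun
        · exact absurd (h1 ▸ hzk) hvn
      · exact Or.inr (Dcond z (hCsub hz) hzk)
    · intro ed hed
      rw [Walk.edges_append, Walk.edges_append, List.mem_append, List.mem_append] at hed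
      rcases hed with hed | hed | hed
      · exact ear_edge_not_prefix D (hTed hed) le_rfl
      · exact fun hek => hedge ed hed (earPrefix_edges_mono D (Nat.le_succ _) hek)
      · exact ear_edge_not_prefix D (hDed (Walk.edges_dropUntil_subset _ hvD hed)) le_rfl
    · rw [Walk.length_append, Walk.length_append]
      have h1 : 1 ≤ T.length := walk_length_pos _ hsu
      have h2 : 1 ≤ C.length := walk_length_pos _ htv.symm
      omega

lemma step_down (D : OpenEarDecomp H h) (k : Fin (h + 1)) (hk : 0 < (k : ℕ)) {u v : V}
    {q : H.Walk u v} (hq : Adm D ((k : ℕ) + 1) q) :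
    ∃ (a b : V) (q' : H.Walk a b), Adm D ↑k q' ∧ q.length ≤ q'.length := by
  classical
  obtain ⟨hqp, huv, hu1, hv1, hsupp, hedge⟩ := hq
  have memk : ∀ {z : V}, z ∈ (earPrefix D.ear ((k : ℕ) + 1)).verts →
      z ∉ (earPrefix D.ear ↑k).verts → z ∈ (D.ear k).support := by
    intro z hz hzn
    rw [mem_earPrefix_verts] at hz
    obtain ⟨m, hm, hms⟩ := hz
    rcases (by omega : (m : ℕ) < (k : ℕ) ∨ (m : ℕ) = (k : ℕ)) with h1 | h1
    · exact absurd ((mem_earPrefix_verts D).2 ⟨m, h1, hms⟩) hzn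
    · have hmk : m = k := Fin.ext h1
      rwa [hmk] at hms
  by_cases hu : u ∈ (earPrefix D.ear ↑k).verts <;>
    by_cases hv : v ∈ (earPrefix D.ear ↑k).verts
  · exact ⟨u, v, q, ⟨hqp, huv, hu, hv,
      fun z hz hzk => hsupp z hz (earPrefix_verts_mono D (Nat.le_succ _) hzk),
      fun e he hek => hedge e he (earPrefix_edges_mono D (Nat.le_succ _) hek)⟩, le_rfl⟩
  · obtain ⟨a, b, q', hq', hlen⟩ := glue1 D k hk (memk hv1 hv) hv hu q.reverse hqp.reverse
      (fun z hz hzv => by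
        rw [Walk.support_reverse, List.mem_reverse] at hz
        exact (hsupp z hz hzv).symm)
      (fun e he => by
        rw [Walk.edges_reverse, List.mem_reverse] at he
        exact hedge e he)
    rw [Walk.length_reverse] at hlen
    exact ⟨a, b, q', hq', by omega⟩
  · obtain ⟨a, b, q', hq', hlen⟩ := glue1 D k hk (memk hu1 hu) hu hv q hqp hsupp hedge
    exact ⟨a, b, q', hq', by omega⟩
  · obtain ⟨a, b, q', hq', hlen⟩ := glue2 D k hk (memk hu1 hu) hu (memk hv1 hv) hv huv
      q hqp hsupp hedge
    exact ⟨a, b, q', hq', by omega⟩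

lemma chain (D : OpenEarDecomp H h) (n : ℕ) : ∀ (k : ℕ), 1 ≤ k → k + n ≤ h →
    ∀ {u v : V} (q : H.Walk u v), Adm D (k + n) q →
    ∃ (a b : V) (q' : H.Walk a b), Adm D k q' ∧ q.length ≤ q'.length := by
  induction n with
  | zero => exact fun k _ _ u v q hq => ⟨u, v, q, hq, le_rfl⟩
  | succ n ih =>
    intro k hk1 hkn u v q hq
    have hlt : k + n < h + 1 := by omega
    have h0 : 0 < ((⟨k + n, hlt⟩ : Fin (h + 1)) : ℕ) := by simp; omega
    obtain ⟨a, b, q', hq', hl⟩ := step_down D ⟨k + n, hlt⟩ h0 (q := q) hq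
    obtain ⟨a2, b2, q2, hq2, hl2⟩ := ih k hk1 (by omega) q' hq'
    exact ⟨a2, b2, q2, hq2, le_trans hl hl2⟩

end Glue


section Main

variable {V : Type*} {H : SimpleGraph V} {h : ℕ}

lemma main_aux (D : OpenEarDecomp H h) (hD : D.Greedy) (i j : Fin (h + 1))
    (hji : (j : ℕ) < (i : ℕ)) (hjlen : (D.ear j).length = (D.ear i).length)
    (hshort : (D.ear i).length = 2 ∨ (D.ear i).length = 3)
    {x o : V} (hxo : x ≠ o) (W : H.Walk x o) (hWp : W.IsPath)
    (hWlen : W.length = (D.ear i).length)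
    (hWsupp : ∀ z ∈ W.support, z ∈ (D.ear i).support)
    (hWedge : ∀ e ∈ W.edges, e ∈ (D.ear i).edges)
    (hWint : ∀ z ∈ W.support, z ∈ (earPrefix D.ear ↑i).verts → z = x ∨ z = o)
    (ho : o ∈ (earPrefix D.ear ↑i).verts)
    (hxj : x ∈ (D.ear j).support) (hxs : x ≠ D.s j) (hxt : x ≠ D.t j) : False := by
  classical
  have hi0 : 0 < (i : ℕ) := by omega
  have hihl : (i : ℕ) < h + 1 := i.isLt
  have hWedgeP : ∀ n ≤ (i : ℕ), ∀ e ∈ W.edges, e ∉ (earPrefix D.ear n).edgeSet :=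
    fun n hn e he => ear_edge_not_prefix D (hWedge e he) hn
  by_cases hj0 : (j : ℕ) = 0
  · -- the earlier ear is the initial cycle
    have hj' : j = 0 := Fin.ext (by simp [hj0])
    subst hj'
    have hcyc := D.first_cycle
    have hplen : ((D.ear 0).copy rfl D.first_closed.symm).length = (D.ear i).length := by
      rw [Walk.length_copy]; exact hjlen
    have h3le : 3 ≤ ((D.ear 0).copy rfl D.first_closed.symm).length :=
      hcyc.three_le_length
    rcases hshort with h2 | h3
    · omega
    · have hadm : Adm D (1 + ((i : ℕ) - 1)) (D.ear i) := by
        rw [show 1 + ((i : ℕ) - 1) = (i : ℕ) from by omega]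
        exact ear_adm D i hi0
      obtain ⟨u, v, Q, hQ, hQlen⟩ := chain D ((i : ℕ) - 1) 1 le_rfl (by omega)
        (D.ear i) hadm
      obtain ⟨hQp, hQne, hQu, hQv, hQsupp, hQedge⟩ := hQ
      have hsupp0 : ∀ {z : V}, z ∈ (earPrefix D.ear 1).verts →
          z ∈ ((D.ear 0).copy rfl D.first_closed.symm).support := by
        intro z hz
        rw [Walk.support_copy]
        rw [mem_earPrefix_verts] at hz
        obtain ⟨m, hm, hms⟩ := hz
        have hm0 : m = 0 := Fin.ext (by simp; omega)
        rwa [hm0] at hms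
      have hadje : s(v, u) ∈ ((D.ear 0).copy rfl D.first_closed.symm).edges :=
        triangle_edge _ hcyc (by omega) (hsupp0 hQv) (hsupp0 hQu) (Ne.symm hQne)
      rw [Walk.edges_copy] at hadje
      have hadj : H.Adj v u := (D.ear 0).adj_of_mem_edges hadje
      have hnotin : s(v, u) ∉ Q.edges := by
        intro hin
        refine hQedge _ hin ?_
        rw [mem_earPrefix_edges]
        exact ⟨0, by simp, hadje⟩
      have hcyc2 : (Walk.cons hadj Q).IsCycle :=
        (Walk.cons_isCycle_iff Q hadj).2 ⟨hQp, hnotin⟩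
      have hbound := hD.1 v (Walk.cons hadj Q) hcyc2
      rw [Walk.length_cons] at hbound
      have hj0len := hjlen
      omega
  · -- j ≥ 1
    have hj1 : 0 < (j : ℕ) := Nat.pos_of_ne_zero hj0
    have hxnG : x ∉ (earPrefix D.ear ↑j).verts := by
      intro hxG
      rcases D.internal_disjoint j hj1 x hxj hxG with h1 | h1
      exacts [hxs h1, hxt h1]
    have hj1i : (j : ℕ) + 1 ≤ (i : ℕ) := hji
    by_cases hoG : o ∈ (earPrefix D.ear ↑j).verts
    · -- Case H1 : the other endpoint is already present at step j
      obtain ⟨a, b, q', hq', hlen'⟩ := glue1 D j hj1 hxj hxnG hoG W hWp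
        (fun z hz hzv => hWint z hz (earPrefix_verts_mono D hj1i hzv))
        (fun e he hek => hWedgeP _ hj1i e he hek)
      have hb := adm_le hD hj1 hq'
      rw [hjlen] at hb
      omega
    · -- the other endpoint first appears inside some ear m with j ≤ m < i
      have hex : ∃ n : ℕ, ∃ hn : n < h + 1, o ∈ (D.ear ⟨n, hn⟩).support := by
        have ho' := ho
        rw [mem_earPrefix_verts] at ho'
        obtain ⟨m, hm, hms⟩ := ho'
        exact ⟨(m : ℕ), m.isLt, hms⟩
      set M := Nat.find hex with hMdef
      obtain ⟨hMlt, hMs⟩ := Nat.find_spec hex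
      have honG : o ∉ (earPrefix D.ear M).verts := by
        intro hG
        rw [mem_earPrefix_verts] at hG
        obtain ⟨m', hm', hms'⟩ := hG
        exact Nat.find_min hex hm' ⟨m'.isLt, hms'⟩
      have hMi : M < (i : ℕ) := by
        have ho' := ho
        rw [mem_earPrefix_verts] at ho'
        obtain ⟨m0, hm0, hms0⟩ := ho'
        have := Nat.find_min' hex ⟨m0.isLt, hms0⟩
        omega
      have hMj : ¬ (M < (j : ℕ)) := by
        intro hMjlt
        exact hoG ((mem_earPrefix_verts D).2 ⟨⟨M, hMlt⟩, hMjlt, hMs⟩)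
      rcases (by omega : M = (j : ℕ) ∨ (j : ℕ) < M) with hMeq | hMgt
      · -- Case H2 : o is an internal vertex of ear j as well
        have hmfj : (⟨M, hMlt⟩ : Fin (h + 1)) = j := Fin.ext hMeq
        have hMs' : o ∈ (D.ear j).support := by rwa [hmfj] at hMs
        have honG' : o ∉ (earPrefix D.ear ↑j).verts := by rwa [hMeq] at honG
        obtain ⟨a, b, q', hq', hlen'⟩ := glue2 D j hj1 hxj hxnG hMs' honG' hxo W hWp
          (fun z hz hzv => hWint z hz (earPrefix_verts_mono D hj1i hzv))
          (fun e he hek => hWedgeP _ hj1i e he hek)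
        have hb := adm_le hD hj1 hq'
        rw [hjlen] at hb
        omega
      · -- Case H3 : o is an internal vertex of a strictly later ear m
        have hmf0 : 0 < ((⟨M, hMlt⟩ : Fin (h + 1)) : ℕ) := by simp; omega
        have hxGm : x ∈ (earPrefix D.ear M).verts :=
          (mem_earPrefix_verts D).2 ⟨j, hMgt, hxj⟩
        have hM1i : M + 1 ≤ (i : ℕ) := hMi
        obtain ⟨a, b, q', hq', hlen'⟩ := glue1 D ⟨M, hMlt⟩ hmf0 hMs honG hxGm
          W.reverse hWp.reverse
          (fun z hz hzv => by
            rw [Walk.support_reverse, List.mem_reverse] at hz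
            exact (hWint z hz (earPrefix_verts_mono D hM1i hzv)).symm)
          (fun e he hek => by
            rw [Walk.edges_reverse, List.mem_reverse] at he
            exact hWedgeP _ hM1i e he hek)
        have hbm := adm_le hD hmf0 hq'
        rw [Walk.length_reverse] at hlen'
        have hadm : Adm D ((j : ℕ) + (M - (j : ℕ))) (D.ear ⟨M, hMlt⟩) := by
          rw [show (j : ℕ) + (M - (j : ℕ)) = M from by omega]
          exact ear_adm D ⟨M, hMlt⟩ hmf0
        obtain ⟨a2, b2, q2, hq2, hl2⟩ := chain D (M - (j : ℕ)) (j : ℕ) hj1 (by omega)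
          (D.ear ⟨M, hMlt⟩) hadm
        have hbj := adm_le hD hj1 hq2
        rw [hjlen] at hbj
        omega

end Main

/-- In a greedy open ear decomposition of a minimally 2-connected graph, if two
ears `P_j` and `P_i` with `j < i` both have exactly two edges or both have
exactly three edges, then no endpoint of `P_i` is an internal vertex of `P_j`. -/
theorem greedy_equal_short_ears_no_internal_endpoint {V : Type*}
    (H : SimpleGraph V) (hmin : MinimallyTwoConnected H) {h : ℕ}
    (D : OpenEarDecomp H h) (hD : D.Greedy)
    (i j : Fin (h + 1)) (hji : (j : ℕ) < (i : ℕ))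
    (hlen : ((D.ear i).length = 2 ∧ (D.ear j).length = 2) ∨
      ((D.ear i).length = 3 ∧ (D.ear j).length = 3)) :
    ∀ x, (x = D.s i ∨ x = D.t i) → x ∈ (D.ear j).support →
      x = D.s j ∨ x = D.t j := by
  classical
  intro x hx hxj
  by_contra hcon
  push_neg at hcon
  obtain ⟨hxs, hxt⟩ := hcon
  have hi0 : 0 < (i : ℕ) := by omega
  have hjlen : (D.ear j).length = (D.ear i).length := by
    rcases hlen with ⟨h1, h2⟩ | ⟨h1, h2⟩ <;> omega
  have hshort : (D.ear i).length = 2 ∨ (D.ear i).length = 3 := by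
    rcases hlen with ⟨h1, _⟩ | ⟨h1, _⟩
    · exact Or.inl h1
    · exact Or.inr h1
  have hne := D.ends_ne i hi0
  have hint := D.internal_disjoint i hi0
  have hmem := D.ends_mem i hi0
  rcases hx with rfl | rfl
  · exact main_aux D hD i j hji hjlen hshort hne (D.ear i) (D.ears_path i hi0) rfl
      (fun z hz => hz) (fun e he => he) (fun z hz hzv => hint z hz hzv)
      hmem.2 hxj hxs hxt
  · refine main_aux D hD i j hji hjlen hshort (Ne.symm hne) (D.ear i).reverse
      (D.ears_path i hi0).reverse (by rw [Walk.length_reverse]) ?_ ?_ ?_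
      hmem.1 hxj hxs hxt
    · intro z hz; rw [Walk.support_reverse, List.mem_reverse] at hz; exact hz
    · intro e he; rw [Walk.edges_reverse, List.mem_reverse] at he; exact he
    · intro z hz hzv
      rw [Walk.support_reverse, List.mem_reverse] at hz
      exact (hint z hz hzv).symm
end

section
/- For every finite tree T with at least two vertices, pc(T) = Δ(T), where Δ(T) is the maximum degree of T; that is, the least number of colors in an edge coloring of T such that every pair of distinct vertices is joined by a properly colored path equals the maximum degree of T. -/
open SimpleGraph

/-- A list of colors is *proper* if no two consecutive terms are equal. -/
def ProperSeq {α : Type*} (l : List α) : Prop :=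
  l.Chain' (· ≠ ·)

/-- An edge coloring of `G` is proper connected if every pair of distinct
vertices is joined by a path whose sequence of edge colors has no two equal
consecutive terms. -/
def IsProperConnected {V : Type*} (G : SimpleGraph V) {β : Type*}
    (c : Sym2 V → β) : Prop :=
  ∀ u v : V, u ≠ v → ∃ p : G.Walk u v, p.IsPath ∧ ProperSeq (p.edges.map c)

/-- The proper connection number `pc(G)` of a graph `G`: the least number of
colors in a proper connected edge coloring of `G`. -/
noncomputable def pc {V : Type*} (G : SimpleGraph V) : ℕ :=
  sInf {n : ℕ | ∃ c : Sym2 V → Fin n, IsProperConnected G c}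

/-- Auxiliary recursive definition of the edge coloring of a rooted tree:
`colAux k p d hd h v` colors the edge from `v` to its parent `p v`. -/
noncomputable def colAux {V : Type*} (k : ℕ) (p : V → V) (d : V → ℕ)
    (hd : ∀ v, d v ≠ 0 → d (p v) < d v) (h : V → V → Fin (k+1)) (v : V) : Fin (k+1) :=
  if hv : d v = 0 then 0
  else Equiv.swap (colAux k p d hd h (p v)) (h (p v) (p (p v))) (h (p v) v)
termination_by d v
decreasing_by exact hd v hv

theorem colAux_eq {V : Type*} (k : ℕ) (p : V → V) (d : V → ℕ)
    (hd : ∀ v, d v ≠ 0 → d (p v) < d v) (h : V → V → Fin (k+1)) (v : V) (hv : d v ≠ 0) :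
    colAux k p d hd h v
      = Equiv.swap (colAux k p d hd h (p v)) (h (p v) (p (p v))) (h (p v) v) := by
  rw [colAux]; simp [hv]

/-- If an edge coloring is locally injective (edges at a common vertex get distinct
colors), then every path is properly colored. -/
theorem proper_of_locallyInj {V β : Type*} {T : SimpleGraph V} {c : Sym2 V → β}
    (LI : ∀ v a b, T.Adj v a → T.Adj v b → a ≠ b → c s(v, a) ≠ c s(v, b)) :
    ∀ {u w : V} (q : T.Walk u w), q.IsPath → ProperSeq (q.edges.map c)
  | _, _, .nil, _ => by simp [ProperSeq]; exact List.isChain_nil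
  | _, _, .cons _ .nil, _ => by simp [ProperSeq]; exact List.isChain_singleton _
  | u, w, @Walk.cons _ _ _ x _ h (@Walk.cons _ _ _ y _ h' q), hp => by
    rw [Walk.cons_isPath_iff] at hp
    rw [Walk.edges_cons, Walk.edges_cons, List.map_cons, List.map_cons, ProperSeq,
      List.Chain', List.isChain_cons_cons]
    constructor
    · have huy : u ≠ y := by
        rintro rfl
        exact hp.2 (by simp [Walk.support_cons, q.start_mem_support])
      have := LI x u y h.symm h' huy
      rw [Sym2.eq_swap] at this
      simpa [ProperSeq] using this
    · rw [← List.map_cons, ← Walk.edges_cons]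
      exact proper_of_locallyInj LI (.cons h' q) hp.1

/-- For every finite tree `T` with at least two vertices,
`pc(T) = Δ(T)`, the maximum degree of `T`. -/
theorem pc_tree_eq_maxDegree {V : Type*} [Fintype V] (T : SimpleGraph V)
    [DecidableRel T.Adj] (hT : T.IsTree) (hV : 2 ≤ Fintype.card V) :
    pc T = T.maxDegree := by
  classical
  obtain ⟨x0, y0, hxy⟩ := Fintype.exists_pair_of_one_lt_card hV
  have hconn := hT.isConnected
  have hΔ1 : 1 ≤ T.maxDegree := by
    obtain ⟨w⟩ := hconn.preconnected x0 y0
    have hadj : T.Adj x0 (w.getVert 1) := w.adj_snd (Walk.not_nil_of_ne hxy)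
    calc 1 ≤ T.degree x0 := (T.degree_pos_iff_exists_adj x0).2 ⟨_, hadj⟩
      _ ≤ T.maxDegree := T.degree_le_maxDegree x0
  obtain ⟨k, hk⟩ : ∃ k, T.maxDegree = k + 1 := ⟨T.maxDegree - 1, by omega⟩
  -- Lower bound
  have lower : ∀ n (c : Sym2 V → Fin n), IsProperConnected T c → T.maxDegree ≤ n := by
    intro n c hc
    haveI : Nonempty V := ⟨x0⟩
    obtain ⟨v, hv⟩ := T.exists_maximal_degree_vertex
    rw [hv, ← T.card_neighborFinset_eq_degree]
    have hcard : (T.neighborFinset v).card ≤ (Finset.univ : Finset (Fin n)).card := by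
      apply Finset.card_le_card_of_injOn (fun w => c s(v, w)) (fun _ _ => Finset.mem_univ _)
      intro a ha b hb hab2
      by_contra hne
      simp only [Finset.mem_coe, mem_neighborFinset] at ha hb
      have hW : (Walk.cons ha.symm (Walk.cons hb (Walk.nil : T.Walk b b))).IsPath := by
        simp [Walk.cons_isPath_iff, hb.ne, ha.ne', hne]
      obtain ⟨q, hq, hqp⟩ := hc a b hne
      have hque := (hT.existsUnique_path a b).unique hq hW
      rw [hque] at hqp
      simp only [Walk.edges_cons, Walk.edges_nil, List.map_cons, List.map_nil, ProperSeq,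
        List.Chain', List.isChain_cons_cons] at hqp
      apply hqp.1
      dsimp only at hab2
      rwa [Sym2.eq_swap (a := v) (b := a)] at hab2
    simpa using hcard
  -- Upper bound : construct a coloring with k+1 colors
  have upper : ∃ c : Sym2 V → Fin (k + 1), IsProperConnected T c := by
    set r := x0 with hr
    choose f hfp hfu using fun v => hT.existsUnique_path v r
    set d := fun v => (f v).length with hdd
    set p := fun v => (f v).getVert 1 with hpp
    have hfr : f r = Walk.nil := (hfu r Walk.nil Walk.IsPath.nil).symm
    have hd0 : ∀ v, d v = 0 ↔ v = r := by
      intro v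
      constructor
      · intro h0; exact Walk.eq_of_length_eq_zero h0
      · rintro rfl; show (f r).length = 0; rw [hfr]; rfl
    have hnil : ∀ v, v ≠ r → ¬ (f v).Nil := fun v hv => Walk.not_nil_of_ne hv
    have hpadj : ∀ v, v ≠ r → T.Adj v (p v) := fun v hv => Walk.adj_snd (hnil v hv)
    have htail : ∀ v, v ≠ r → f (p v) = (f v).tail :=
      fun v hv => (hfu _ _ ((hfp v).tail)).symm
    have hdp : ∀ v, v ≠ r → d (p v) + 1 = d v := by
      intro v hv
      have h1 := Walk.length_tail_add_one (hnil v hv)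
      rw [← htail v hv] at h1
      exact h1
    have hd' : ∀ v, d v ≠ 0 → d (p v) < d v := by
      intro v h0
      have hv : v ≠ r := fun h => h0 ((hd0 v).2 h)
      have := hdp v hv; omega
    have hpr : p r = r := by simp [hpp, hfr, Walk.getVert]
    have hedge : ∀ a b, T.Adj a b → p a = b ∨ p b = a := by
      intro a b hab
      by_cases hb : b ∈ (f a).support
      · left
        have h2 : (f a).takeUntil b hb = Walk.cons hab Walk.nil :=
          (hT.existsUnique_path a b).unique ((hfp a).takeUntil hb)
            (by simp [Walk.cons_isPath_iff, hab.ne])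
        have h3 := (f a).take_spec hb
        rw [h2] at h3
        show (f a).getVert 1 = b
        rw [← h3]
        simp [Walk.getVert_cons_succ]
      · right
        have hq : (Walk.cons hab.symm (f a)).IsPath := by
          rw [Walk.cons_isPath_iff]; exact ⟨hfp a, hb⟩
        have h2 := hfu b _ hq
        show (f b).getVert 1 = a
        rw [← h2]
        simp [Walk.getVert_cons_succ]
    have hner : ∀ a b, T.Adj a b → d a < d b → b ≠ r := by
      intro a b hab hlt hbr
      rw [hbr] at hlt
      have : d r = 0 := (hd0 r).2 rfl
      omega
    have hchild : ∀ a b, T.Adj a b → d a < d b → p b = a := by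
      intro a b hab hlt
      rcases hedge a b hab with h | h
      · exfalso
        by_cases ha : a = r
        · rw [ha, hpr] at h
          have : d b = 0 := (hd0 b).2 h.symm
          omega
        · have := hdp a ha; rw [h] at this; omega
      · exact h
    have hdne : ∀ a b, T.Adj a b → d a ≠ d b := by
      intro a b hab heq
      rcases hedge a b hab with h | h
      · by_cases ha : a = r
        · rw [ha] at h hab
          rw [hpr] at h
          rw [← h] at hab
          exact T.loopless.irrefl _ hab
        · have := hdp a ha; rw [h] at this; omega
      · by_cases hb : b = r
        · rw [hb] at h hab
          rw [hpr] at h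
          rw [← h] at hab
          exact T.loopless.irrefl _ hab
        · have := hdp b hb; rw [h] at this; omega
    -- injections at each vertex
    have hinj : ∀ u : V, ∃ h : V → Fin (k+1), Set.InjOn h (T.neighborSet u) := by
      intro u
      have hcard : Fintype.card (T.neighborSet u) ≤ Fintype.card (Fin (k+1)) := by
        rw [T.card_neighborSet_eq_degree, Fintype.card_fin, ← hk]
        exact T.degree_le_maxDegree u
      obtain ⟨emb⟩ := Function.Embedding.nonempty_of_card_le hcard
      refine ⟨fun v => if hv : v ∈ T.neighborSet u then emb ⟨v, hv⟩ else 0, ?_⟩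
      intro a ha b hb hab
      simp only [dif_pos ha, dif_pos hb] at hab
      exact congrArg Subtype.val (emb.injective hab)
    choose h hh using hinj
    set g := colAux k p d hd' h with hgdef
    have hg : ∀ v, v ≠ r → g v = Equiv.swap (g (p v)) (h (p v) (p (p v))) (h (p v) v) :=
      fun v hv => colAux_eq k p d hd' h v (fun h0 => hv ((hd0 v).1 h0))
    set c : Sym2 V → Fin (k+1) := Sym2.lift ⟨fun a b =>
        if d a < d b then g b else if d b < d a then g a else 0, by
      intro a b
      dsimp only
      rcases lt_trichotomy (d a) (d b) with h1 | h1 | h1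
      · simp [h1, lt_asymm h1]
      · simp [h1]
      · simp [h1, lt_asymm h1]⟩ with hcdef
    have hcmk : ∀ a b : V, c s(a, b)
        = if d a < d b then g b else if d b < d a then g a else 0 := by
      intro a b; rw [hcdef, Sym2.lift_mk]
    have hcc : ∀ a b, d a < d b → c s(a, b) = g b := by
      intro a b hlt; rw [hcmk]; simp [hlt]
    -- local injectivity
    have key : ∀ v a b, T.Adj v a → T.Adj v b → a ≠ b → d v < d a → d b < d v →
        c s(v, a) ≠ c s(v, b) := by
      intro v a b hva hvb hab h1 h2
      have hpa := hchild v a hva h1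
      have hpv : p v = b := hchild b v hvb.symm h2
      have hvr : v ≠ r := hner b v hvb.symm h2
      have har : a ≠ r := hner v a hva h1
      rw [hcc v a h1]
      have hcb : c s(v, b) = g v := by rw [hcmk]; simp [h2, lt_asymm h2]
      rw [hcb, hg a har, hpa]
      intro heq
      have h3 : Equiv.swap (g v) (h v (p v)) (h v (p v)) = g v := Equiv.swap_apply_right _ _
      have h4 := (Equiv.swap (g v) (h v (p v))).injective (heq.trans h3.symm)
      have hmem1 : a ∈ T.neighborSet v := hva
      have hmem2 : p v ∈ T.neighborSet v := hpadj v hvr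
      have h5 : a = p v := hh v hmem1 hmem2 h4
      rw [hpv] at h5
      exact hab h5
    have LI : ∀ v a b, T.Adj v a → T.Adj v b → a ≠ b → c s(v, a) ≠ c s(v, b) := by
      intro v a b hva hvb hab
      have hna := hdne v a hva
      have hnb := hdne v b hvb
      rcases lt_or_gt_of_ne hna with h1 | h1 <;> rcases lt_or_gt_of_ne hnb with h2 | h2
      · -- both children
        have hpa := hchild v a hva h1
        have hpb := hchild v b hvb h2
        have har : a ≠ r := hner v a hva h1
        have hbr : b ≠ r := hner v b hvb h2
        rw [hcc v a h1, hcc v b h2, hg a har, hg b hbr, hpa, hpb]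
        intro heq
        have h4 := (Equiv.swap (g v) (h v (p v))).injective heq
        exact hab (hh v hva hvb h4)
      · exact key v a b hva hvb hab h1 h2
      · exact (key v b a hvb hva hab.symm h2 h1).symm
      · -- both parents: impossible
        have hpa : p v = a := hchild a v hva.symm h1
        have hpb : p v = b := hchild b v hvb.symm h2
        exact absurd (hpa.symm.trans hpb) hab
    refine ⟨c, fun u v huv => ?_⟩
    obtain ⟨w⟩ := hconn.preconnected u v
    exact ⟨w.toPath, w.toPath.2, proper_of_locallyInj LI _ w.toPath.2⟩
  have hmem : T.maxDegree ∈ {n : ℕ | ∃ c : Sym2 V → Fin n, IsProperConnected T c} := by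
    rw [hk]; exact upper
  refine le_antisymm (Nat.sInf_le hmem) (le_csInf ⟨_, hmem⟩ ?_)
  rintro n ⟨c, hc⟩
  exact lower n c hc
end
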